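/- arXiv:0904.0932 — 6 statements merged into one kernel-verified Lean document; each statement's English description precedes it below -/
import Mathlib

section
/- Let (Y_k) be a sequence of real random variables adapted to a filtration (G_k) with sum over n of E[Y_n^2]/n^2 finite, and suppose E[Y_{n+1} | G_n] converges almost surely to a random variable Y. Then (1/n) * sum_{k=1}^n Y_k converges almost surely to Y. -/
open MeasureTheory Filter Real
open scoped ENNReal NNReal Topology


lemma aux_sq_toReal {Ω : Type*} {m0 : MeasurableSpace Ω} {μ : Measure Ω}
    {f : Ω → ℝ} (hf : MemLp f 2 μ) :
    ((eLpNorm f 2 μ).toReal) ^ 2 = ∫ ω, f ω ^ 2 ∂μ := by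
  have h1 : ∫ ω, f ω ^ 2 ∂μ = (∫⁻ ω, (‖f ω‖₊ : ℝ≥0∞) ^ (2 : ℕ) ∂μ).toReal := by
    rw [integral_eq_lintegral_of_nonneg_ae (Filter.Eventually.of_forall fun x => sq_nonneg _)
      ((hf.1.norm.aemeasurable.pow_const 2).aestronglyMeasurable.congr
        (Filter.Eventually.of_forall fun x => by simp [sq_abs, Real.norm_eq_abs]))]
    congr 1
    refine lintegral_congr fun x => ?_
    rw [show f x ^ 2 = ‖f x‖ ^ 2 by simp [Real.norm_eq_abs, sq_abs],
      ENNReal.ofReal_pow (norm_nonneg _), ofReal_norm, enorm_eq_nnnorm]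
  have h2 : eLpNorm f 2 μ = (∫⁻ ω, (‖f ω‖₊ : ℝ≥0∞) ^ (2 : ℕ) ∂μ) ^ (1 / 2 : ℝ) := by
    rw [eLpNorm_eq_lintegral_rpow_enorm_toReal two_ne_zero ENNReal.ofNat_ne_top]
    norm_num
    simp only [enorm_eq_nnnorm]
  rw [h1, h2, ← ENNReal.toReal_rpow, ← Real.rpow_natCast _ 2, ← Real.rpow_mul ENNReal.toReal_nonneg]
  norm_num

lemma aux_condExp_memℒp {Ω : Type*} {m m0 : MeasurableSpace Ω} {μ : Measure Ω}
    [IsProbabilityMeasure μ] (hm : m ≤ m0) {g : Ω → ℝ} (hg : MemLp g 2 μ) :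
    MemLp (μ[g|m]) 2 μ ∧ eLpNorm (μ[g|m]) 2 μ ≤ eLpNorm g 2 μ := by
  haveI : SigmaFinite (μ.trim hm) := by infer_instance
  set G := hg.toLp g with hG
  set c := (condExpL2 ℝ ℝ hm G : Ω →₂[μ] ℝ) with hc
  have hae : (c : Ω → ℝ) =ᵐ[μ] μ[g|m] := by
    refine ae_eq_condExp_of_forall_setIntegral_eq hm (hg.integrable one_le_two)
      (fun s _ hμs => integrableOn_Lp_of_measure_ne_top c fact_one_le_two_ennreal.elim hμs.ne)
      (fun s hs hμs => ?_) ?_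
    · rw [integral_condExpL2_eq hm G hs hμs.ne]
      exact setIntegral_congr_ae (hm s hs) ((hg.coeFn_toLp).mono fun x hx _ => hx)
    · exact aestronglyMeasurable_condExpL2 hm G
  refine ⟨(Lp.memLp c).ae_eq hae, ?_⟩
  calc eLpNorm (μ[g|m]) 2 μ = eLpNorm c 2 μ := eLpNorm_congr_ae hae.symm
    _ ≤ eLpNorm G 2 μ := eLpNorm_condExpL2_le hm G
    _ = eLpNorm g 2 μ := eLpNorm_congr_ae hg.coeFn_toLp

lemma aux_kron_id (u : ℕ → ℝ) (n : ℕ) :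
    ∑ k ∈ Finset.range n, u k
      = n * (∑ j ∈ Finset.range n, u j / (j + 1))
        - ∑ k ∈ Finset.range n, ∑ j ∈ Finset.range k, u j / (j + 1) := by
  induction n with
  | zero => simp
  | succ n ih =>
    rw [Finset.sum_range_succ, ih,
      Finset.sum_range_succ (f := fun k => ∑ j ∈ Finset.range k, u j / ((j : ℝ) + 1)),
      Finset.sum_range_succ (f := fun j => u j / ((j : ℝ) + 1))]
    have hn : ((n : ℝ) + 1) ≠ 0 := by positivity
    push_cast
    field_simp
    ring

lemma aux_kronecker {u : ℕ → ℝ} {s : ℝ}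
    (h : Tendsto (fun n => ∑ j ∈ Finset.range n, u j / (j + 1)) atTop (𝓝 s)) :
    Tendsto (fun n : ℕ => (1 / (n : ℝ)) * ∑ k ∈ Finset.range n, u k) atTop (𝓝 0) := by
  have hces := h.cesaro
  have hsub : Tendsto (fun n : ℕ => (∑ j ∈ Finset.range n, u j / (j + 1))
      - (n : ℝ)⁻¹ * ∑ k ∈ Finset.range n, ∑ j ∈ Finset.range k, u j / (j + 1))
      atTop (𝓝 (s - s)) := h.sub hces
  rw [sub_self] at hsub
  refine hsub.congr' ?_
  filter_upwards [eventually_ne_atTop 0] with n hn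
  have hn' : (n : ℝ) ≠ 0 := Nat.cast_ne_zero.2 hn
  rw [aux_kron_id u n]
  field_simp

theorem stmt0
    {Ω : Type*} {m0 : MeasurableSpace Ω} {μ : Measure Ω} [IsProbabilityMeasure μ]
    (𝒢 : ℕ → MeasurableSpace Ω) (h𝒢mono : Monotone 𝒢) (h𝒢le : ∀ n, 𝒢 n ≤ m0)
    (Y : ℕ → Ω → ℝ) (hadp : ∀ n, Measurable[𝒢 n] (Y n))
    (hL2 : ∀ n, MemLp (Y n) 2 μ)
    (hsum : Summable (fun n : ℕ => (∫ ω, (Y (n + 1) ω) ^ 2 ∂μ) / ((n + 1 : ℝ)) ^ 2))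
    (Ylim : Ω → ℝ)
    (hce : ∀ᵐ ω ∂μ, Tendsto (fun n => (μ[Y (n + 1)|𝒢 n]) ω) atTop (𝓝 (Ylim ω))) :
    ∀ᵐ ω ∂μ, Tendsto (fun n : ℕ => (1 / (n : ℝ)) * ∑ k ∈ Finset.Icc 1 n, Y k ω)
      atTop (𝓝 (Ylim ω)) := by
  classical
  set ℱ : Filtration ℕ m0 := ⟨𝒢, h𝒢mono, h𝒢le⟩ with hℱ
  set c : ℕ → Ω → ℝ := fun k => μ[Y (k + 1)|𝒢 k] with hcdef
  set g : ℕ → Ω → ℝ := fun k => ((k : ℝ) + 1)⁻¹ • (Y (k + 1) - c k) with hgdef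
  set f : ℕ → Ω → ℝ := fun n => ∑ k ∈ Finset.range n, g k with hfdef
  -- basic L2 facts
  have hc2 : ∀ k, MemLp (c k) 2 μ := fun k => (aux_condExp_memℒp (h𝒢le k) (hL2 (k + 1))).1
  have hcle : ∀ k, eLpNorm (c k) 2 μ ≤ eLpNorm (Y (k + 1)) 2 μ :=
    fun k => (aux_condExp_memℒp (h𝒢le k) (hL2 (k + 1))).2
  have hg2 : ∀ k, MemLp (g k) 2 μ := fun k => ((hL2 (k + 1)).sub (hc2 k)).const_smul _
  have hf2 : ∀ n, MemLp (f n) 2 μ := fun n => memLp_finsetSum' _ (fun k _ => hg2 k)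
  have hgint : ∀ k, Integrable (g k) μ := fun k => (hg2 k).integrable one_le_two
  have hfint : ∀ n, Integrable (f n) μ := fun n => (hf2 n).integrable one_le_two
  -- strong measurability
  have hgsm : ∀ k n, k < n → StronglyMeasurable[𝒢 n] (g k) := by
    intro k n hkn
    have h1 : StronglyMeasurable[𝒢 n] (Y (k + 1)) :=
      ((hadp (k + 1)).stronglyMeasurable).mono (h𝒢mono hkn)
    have h2 : StronglyMeasurable[𝒢 n] (c k) :=
      stronglyMeasurable_condExp.mono (h𝒢mono hkn.le)
    exact (h1.sub h2).const_smul _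
  have hfsm : ∀ n, StronglyMeasurable[𝒢 n] (f n) := by
    intro n
    have : f n = fun a => ∑ k ∈ Finset.range n, g k a := by
      funext a; simp [hfdef]
    rw [this]
    exact Finset.stronglyMeasurable_fun_sum _ fun k hk => (hgsm k n (Finset.mem_range.1 hk)).comp_measurable measurable_id
  have hadpf : StronglyAdapted ℱ f := fun n => hfsm n
  -- conditional expectation of increments vanishes
  have hg0 : ∀ n, μ[g n|𝒢 n] =ᵐ[μ] 0 := by
    intro n
    have h1 : μ[g n|𝒢 n] =ᵐ[μ] (((n : ℝ) + 1)⁻¹ : ℝ) • μ[Y (n + 1) - c n|𝒢 n] :=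
      condExp_smul _ _ (𝒢 n)
    have h2 : μ[Y (n + 1) - c n|𝒢 n] =ᵐ[μ] μ[Y (n + 1)|𝒢 n] - μ[c n|𝒢 n] :=
      condExp_sub ((hL2 (n + 1)).integrable one_le_two) ((hc2 n).integrable one_le_two) (𝒢 n)
    have h3 : μ[c n|𝒢 n] = c n :=
      condExp_of_stronglyMeasurable (h𝒢le n) stronglyMeasurable_condExp
        ((hc2 n).integrable one_le_two)
    refine h1.trans ?_
    filter_upwards [h2] with ω h2ω
    simp only [Pi.smul_apply, h2ω, Pi.sub_apply, Pi.zero_apply, h3, smul_eq_mul]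
    simp [hcdef]
  -- martingale
  have hmart : Martingale f ℱ μ := by
    refine martingale_nat hadpf hfint fun n => ?_
    have hsucc : f (n + 1) = f n + g n := by
      simp only [hfdef, Finset.sum_range_succ]
    rw [hsucc]
    have h1 : μ[f n + g n|𝒢 n] =ᵐ[μ] μ[f n|𝒢 n] + μ[g n|𝒢 n] :=
      condExp_add (hfint n) (hgint n) (𝒢 n)
    have h2 : μ[f n|𝒢 n] = f n :=
      condExp_of_stronglyMeasurable (h𝒢le n) (hfsm n) (hfint n)
    filter_upwards [h1, hg0 n] with ω h1ω h2ω
    change f n ω = μ[f n + g n|𝒢 n] ω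
    simp only [h1ω, Pi.add_apply, h2, h2ω, Pi.zero_apply, add_zero]
  -- orthogonality
  have horth : ∀ n, ∫ ω, f n ω * g n ω ∂μ = 0 := by
    intro n
    have hprod : Integrable (fun ω => f n ω * g n ω) μ := by
      have := (hf2 n).smul (hg2 n)
        (p := 2) (q := 2) (r := 1)
        (hpqr := ⟨by rw [inv_one]; exact ENNReal.inv_two_add_inv_two⟩)
      rw [memLp_one_iff_integrable] at this
      exact this.congr (Eventually.of_forall fun ω => by simp [mul_comm])
    have hpull : μ[(fun ω => f n ω * g n ω)|𝒢 n] =ᵐ[μ] f n * μ[g n|𝒢 n] :=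
      condExp_mul_of_stronglyMeasurable_left (hfsm n) hprod (hgint n)
    have hzero : μ[(fun ω => f n ω * g n ω)|𝒢 n] =ᵐ[μ] 0 := by
      filter_upwards [hpull, hg0 n] with ω h1ω h2ω
      simp [h1ω, h2ω]
    calc ∫ ω, f n ω * g n ω ∂μ = ∫ ω, (μ[(fun ω => f n ω * g n ω)|𝒢 n]) ω ∂μ :=
          (integral_condExp (h𝒢le n)).symm
      _ = 0 := by
          rw [integral_congr_ae hzero]; simp
  -- second moment recursion
  have hrec : ∀ n, ∫ ω, f (n + 1) ω ^ 2 ∂μ = ∫ ω, f n ω ^ 2 ∂μ + ∫ ω, g n ω ^ 2 ∂μ := by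
    intro n
    have hsucc : ∀ ω, f (n + 1) ω = f n ω + g n ω := by
      intro ω
      simp only [hfdef, Finset.sum_range_succ, Finset.sum_apply, Pi.add_apply]
    have hexp : ∀ ω, f (n + 1) ω ^ 2 = f n ω ^ 2 + 2 * (f n ω * g n ω) + g n ω ^ 2 := by
      intro ω; rw [hsucc ω]; ring
    have hprod : Integrable (fun ω => f n ω * g n ω) μ := by
      have := (hf2 n).smul (hg2 n)
        (p := 2) (q := 2) (r := 1)
        (hpqr := ⟨by rw [inv_one]; exact ENNReal.inv_two_add_inv_two⟩)
      rw [memLp_one_iff_integrable] at this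
      exact this.congr (Eventually.of_forall fun ω => by simp [mul_comm])
    have hA : Integrable (fun ω => f n ω ^ 2) μ := (hf2 n).integrable_sq
    have hB : Integrable (fun ω => 2 * (f n ω * g n ω)) μ := hprod.const_mul 2
    have hC : Integrable (fun ω => g n ω ^ 2) μ := (hg2 n).integrable_sq
    have i1 : ∫ ω, (f n ω ^ 2 + 2 * (f n ω * g n ω) + g n ω ^ 2) ∂μ
        = (∫ ω, (f n ω ^ 2 + 2 * (f n ω * g n ω)) ∂μ) + ∫ ω, g n ω ^ 2 ∂μ :=
      integral_add (hA.add hB) hC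
    have i2 : ∫ ω, (f n ω ^ 2 + 2 * (f n ω * g n ω)) ∂μ
        = (∫ ω, f n ω ^ 2 ∂μ) + ∫ ω, 2 * (f n ω * g n ω) ∂μ := integral_add hA hB
    have i3 : ∫ ω, 2 * (f n ω * g n ω) ∂μ = 2 * ∫ ω, f n ω * g n ω ∂μ :=
      integral_const_mul 2 _
    calc ∫ ω, f (n + 1) ω ^ 2 ∂μ
        = ∫ ω, (f n ω ^ 2 + 2 * (f n ω * g n ω) + g n ω ^ 2) ∂μ :=
          integral_congr_ae (Eventually.of_forall fun ω => hexp ω)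
      _ = ∫ ω, f n ω ^ 2 ∂μ + ∫ ω, g n ω ^ 2 ∂μ := by
          rw [i1, i2, i3, horth n]; ring
  -- increment variance bound
  have hgvar : ∀ k, ∫ ω, g k ω ^ 2 ∂μ
      ≤ 4 * ((∫ ω, (Y (k + 1) ω) ^ 2 ∂μ) / ((k + 1 : ℝ)) ^ 2) := by
    intro k
    have ha : eLpNorm (Y (k + 1)) 2 μ ≠ ∞ := (hL2 (k + 1)).eLpNorm_ne_top
    have hsub : eLpNorm (Y (k + 1) - c k) 2 μ ≤ 2 * eLpNorm (Y (k + 1)) 2 μ := by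
      calc eLpNorm (Y (k + 1) - c k) 2 μ
          ≤ eLpNorm (Y (k + 1)) 2 μ + eLpNorm (c k) 2 μ :=
            eLpNorm_sub_le (hL2 (k + 1)).1 (hc2 k).1 one_le_two
        _ ≤ 2 * eLpNorm (Y (k + 1)) 2 μ := by
            rw [two_mul]; exact add_le_add le_rfl (hcle k)
    have hsub2 : ∫ ω, (Y (k + 1) ω - c k ω) ^ 2 ∂μ ≤ 4 * ∫ ω, (Y (k + 1) ω) ^ 2 ∂μ := by
      have hmem : MemLp (Y (k + 1) - c k) 2 μ := (hL2 (k + 1)).sub (hc2 k)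
      have e1 := aux_sq_toReal hmem
      have e2 := aux_sq_toReal (hL2 (k + 1))
      have h1 : (eLpNorm (Y (k + 1) - c k) 2 μ).toReal
          ≤ 2 * (eLpNorm (Y (k + 1)) 2 μ).toReal := by
        rw [show (2 : ℝ) * (eLpNorm (Y (k + 1)) 2 μ).toReal
            = ((2 : ℝ≥0∞) * eLpNorm (Y (k + 1)) 2 μ).toReal by
          rw [ENNReal.toReal_mul]; norm_num]
        exact ENNReal.toReal_mono (ENNReal.mul_ne_top (by norm_num) ha) hsub
      have h2 : ((eLpNorm (Y (k + 1) - c k) 2 μ).toReal) ^ 2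
          ≤ (2 * (eLpNorm (Y (k + 1)) 2 μ).toReal) ^ 2 :=
        pow_le_pow_left₀ ENNReal.toReal_nonneg h1 2
      have h3 : ∫ ω, (Y (k + 1) ω - c k ω) ^ 2 ∂μ
          = ((eLpNorm (Y (k + 1) - c k) 2 μ).toReal) ^ 2 := by
        rw [e1]
        exact integral_congr_ae (Eventually.of_forall fun ω => by simp)
      rw [h3]
      calc ((eLpNorm (Y (k + 1) - c k) 2 μ).toReal) ^ 2
          ≤ (2 * (eLpNorm (Y (k + 1)) 2 μ).toReal) ^ 2 := h2
        _ = 4 * ((eLpNorm (Y (k + 1)) 2 μ).toReal) ^ 2 := by ring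
        _ = 4 * ∫ ω, (Y (k + 1) ω) ^ 2 ∂μ := by rw [e2]
    have hgsq : ∀ ω, g k ω ^ 2 = (((k : ℝ) + 1)⁻¹) ^ 2 * (Y (k + 1) ω - c k ω) ^ 2 := by
      intro ω
      simp only [hgdef, Pi.smul_apply, Pi.sub_apply, smul_eq_mul]
      ring
    have hpos : (0 : ℝ) < ((k : ℝ) + 1) ^ 2 := by positivity
    calc ∫ ω, g k ω ^ 2 ∂μ
        = (((k : ℝ) + 1)⁻¹) ^ 2 * ∫ ω, (Y (k + 1) ω - c k ω) ^ 2 ∂μ := by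
          rw [← integral_const_mul]
          exact integral_congr_ae (Eventually.of_forall fun ω => hgsq ω)
      _ ≤ (((k : ℝ) + 1)⁻¹) ^ 2 * (4 * ∫ ω, (Y (k + 1) ω) ^ 2 ∂μ) := by
          apply mul_le_mul_of_nonneg_left hsub2 (by positivity)
      _ = 4 * ((∫ ω, (Y (k + 1) ω) ^ 2 ∂μ) / ((k + 1 : ℝ)) ^ 2) := by
          rw [inv_pow]
          field_simp
  -- uniform L2 bound
  set B : ℝ := ∑' n : ℕ, (∫ ω, (Y (n + 1) ω) ^ 2 ∂μ) / ((n + 1 : ℝ)) ^ 2 with hB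
  have hterm_nonneg : ∀ n : ℕ, 0 ≤ (∫ ω, (Y (n + 1) ω) ^ 2 ∂μ) / ((n + 1 : ℝ)) ^ 2 := by
    intro n
    apply div_nonneg (integral_nonneg fun ω => sq_nonneg _) (by positivity)
  have hfvar : ∀ n, ∫ ω, f n ω ^ 2 ∂μ ≤ 4 * B := by
    intro n
    have hstep : ∫ ω, f n ω ^ 2 ∂μ
        ≤ 4 * ∑ k ∈ Finset.range n, (∫ ω, (Y (k + 1) ω) ^ 2 ∂μ) / ((k + 1 : ℝ)) ^ 2 := by
      induction n with
      | zero => simp [hfdef]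
      | succ n ih =>
        rw [hrec n, Finset.sum_range_succ, mul_add]
        exact add_le_add ih (hgvar n)
    refine hstep.trans ?_
    have := Summable.sum_le_tsum (Finset.range n) (fun k _ => hterm_nonneg k) hsum
    linarith
  have hBnonneg : (0 : ℝ) ≤ B := tsum_nonneg hterm_nonneg
  set R : ℝ≥0 := (Real.sqrt (4 * B)).toNNReal with hR
  have hbdd : ∀ n, eLpNorm (f n) 1 μ ≤ (R : ℝ≥0∞) := by
    intro n
    have h1 : eLpNorm (f n) 1 μ ≤ eLpNorm (f n) 2 μ :=
      eLpNorm_le_eLpNorm_of_exponent_le (by norm_num) (hf2 n).1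
    refine h1.trans ?_
    have h2 : (eLpNorm (f n) 2 μ).toReal ≤ Real.sqrt (4 * B) := by
      refine (Real.le_sqrt ENNReal.toReal_nonneg (by linarith)).2 ?_
      rw [aux_sq_toReal (hf2 n)]
      exact hfvar n
    have h3 : (R : ℝ≥0∞) = ENNReal.ofReal (Real.sqrt (4 * B)) := rfl
    rw [h3]
    exact (ENNReal.le_ofReal_iff_toReal_le (hf2 n).eLpNorm_ne_top (Real.sqrt_nonneg _)).2 h2
  -- a.s. convergence of the martingale
  have htend : ∀ᵐ ω ∂μ, ∃ l, Tendsto (fun n => f n ω) atTop (𝓝 l) :=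
    hmart.submartingale.exists_ae_tendsto_of_bdd hbdd
  -- combine
  filter_upwards [hce, htend] with ω hlim hfl
  obtain ⟨l, hl⟩ := hfl
  have hkron : Tendsto (fun n : ℕ => (1 / (n : ℝ)) *
      ∑ k ∈ Finset.range n, (Y (k + 1) ω - c k ω)) atTop (𝓝 0) := by
    apply aux_kronecker (s := l)
    have heq : (fun n : ℕ => ∑ j ∈ Finset.range n, (Y (j + 1) ω - c j ω) / ((j : ℝ) + 1))
        = fun n => f n ω := by
      funext n
      simp only [hfdef, Finset.sum_apply, hgdef, Pi.smul_apply, Pi.sub_apply, smul_eq_mul]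
      exact Finset.sum_congr rfl fun j _ => (div_eq_inv_mul _ _)
    rw [heq]
    exact hl
  have hces : Tendsto (fun n : ℕ => (n : ℝ)⁻¹ * ∑ k ∈ Finset.range n, c k ω)
      atTop (𝓝 (Ylim ω)) := Tendsto.cesaro hlim
  have hfinal := hkron.add hces
  rw [zero_add] at hfinal
  refine hfinal.congr (fun n => ?_)
  have hIcc : ∑ k ∈ Finset.Icc 1 n, Y k ω = ∑ k ∈ Finset.range n, Y (k + 1) ω := by
    rw [← Finset.Ico_add_one_right_eq_Icc, Finset.sum_Ico_eq_sum_range]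
    simp [add_comm]
  rw [one_div, hIcc]
  rw [← mul_add, ← Finset.sum_add_distrib]
  congr 1
  refine Finset.sum_congr rfl fun k _ => ?_
  ring
end

section
/- Let (Y_k) be a sequence of real random variables adapted to a filtration (G_k) with sum over n of E[Y_n^2]/n^2 finite, and suppose E[Y_{n+1} | G_n] converges almost surely to a random variable Y. Then n * sum_{k≥n} Y_k/k^2 converges almost surely to Y. -/
open MeasureTheory Filter Real
open scoped ENNReal NNReal Topology

private lemma basel : Summable (fun j : ℕ => 1 / ((j : ℝ) + 1) ^ 2) := by
  have h := (summable_nat_add_iff (f := fun n : ℕ => 1 / (n : ℝ) ^ 2) 1).2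
    (Real.summable_one_div_nat_pow.2 one_lt_two)
  refine h.congr fun j => ?_
  push_cast
  ring_nf

private lemma summable_shift {f : ℕ → ℝ} (hf : Summable f) (m : ℕ) :
    Summable fun k : ℕ => f (m + k) := by
  have h := (summable_nat_add_iff (f := f) m).2 hf
  exact h.congr fun k => by rw [add_comm]

private lemma basel_shift (m : ℕ) : Summable fun k : ℕ => 1 / ((m : ℝ) + k + 1) ^ 2 := by
  refine (summable_shift basel m).congr fun k => ?_
  push_cast
  ring_nf

private lemma tele (c : ℝ) (hc : 0 < c) :
    HasSum (fun k : ℕ => 1 / ((c + k) * (c + k + 1))) (1 / c) := by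
  have hpos : ∀ k : ℕ, (0:ℝ) < c + k := fun k => by positivity
  have hterm : ∀ k : ℕ, 1 / ((c + k) * (c + k + 1)) = 1 / (c + k) - 1 / (c + k + 1) := by
    intro k
    have h1 : (c + (k:ℝ)) ≠ 0 := (hpos k).ne'
    have h2 : (c + (k:ℝ) + 1) ≠ 0 := by positivity
    field_simp
    ring
  have hnn : ∀ k : ℕ, (0:ℝ) ≤ 1 / ((c + k) * (c + k + 1)) := by
    intro k; positivity
  rw [hasSum_iff_tendsto_nat_of_nonneg hnn]
  have hps : ∀ n : ℕ, ∑ k ∈ Finset.range n, (1 / ((c + k) * (c + k + 1))) = 1 / c - 1 / (c + n) := by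
    intro n
    calc ∑ k ∈ Finset.range n, 1 / ((c + k) * (c + k + 1))
        = ∑ k ∈ Finset.range n,
            ((fun j : ℕ => 1 / (c + j)) k - (fun j : ℕ => 1 / (c + j)) (k + 1)) :=
          Finset.sum_congr rfl fun k _ => by rw [hterm k]; push_cast; ring_nf
      _ = 1 / (c + ((0:ℕ):ℝ)) - 1 / (c + n) := Finset.sum_range_sub' _ n
      _ = 1 / c - 1 / (c + n) := by norm_num
  simp_rw [hps]
  have h0 : Tendsto (fun n : ℕ => 1 / (c + n)) atTop (𝓝 0) := by
    simp only [one_div]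
    exact tendsto_inv_atTop_zero.comp
      (tendsto_atTop_add_const_left _ c tendsto_natCast_atTop_atTop)
  simpa using (tendsto_const_nhds (x := 1 / c)).sub h0

private lemma S_ge (m : ℕ) : 1 / ((m:ℝ) + 1) ≤ ∑' k : ℕ, 1 / ((m:ℝ) + k + 1) ^ 2 := by
  have h1 := tele ((m:ℝ) + 1) (by positivity)
  rw [← h1.tsum_eq]
  refine Summable.tsum_le_tsum (fun k => ?_) h1.summable (basel_shift m)
  have hx : (0:ℝ) < (m:ℝ) + k + 1 := by positivity
  have e : ((m:ℝ) + 1 + k) = (m:ℝ) + k + 1 := by ring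
  rw [e]
  apply one_div_le_one_div_of_le (by positivity)
  nlinarith

private lemma S_le (m : ℕ) (hm : 1 ≤ m) :
    ∑' k : ℕ, 1 / ((m:ℝ) + k + 1) ^ 2 ≤ 1 / (m:ℝ) := by
  have hm' : (1:ℝ) ≤ (m:ℝ) := by exact_mod_cast hm
  have h1 := tele (m:ℝ) (by linarith)
  rw [← h1.tsum_eq]
  refine Summable.tsum_le_tsum (fun k => ?_) (basel_shift m) h1.summable
  have hx : (1:ℝ) ≤ (m:ℝ) + k := by
    have : (0:ℝ) ≤ (k:ℝ) := Nat.cast_nonneg k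
    linarith
  apply one_div_le_one_div_of_le (by nlinarith)
  nlinarith

private lemma tendsto_S :
    Tendsto (fun m : ℕ => ((m:ℝ) + 1) * ∑' k : ℕ, 1 / ((m:ℝ) + k + 1) ^ 2) atTop (𝓝 1) := by
  have hup : Tendsto (fun m : ℕ => ((m:ℝ) + 1) / m) atTop (𝓝 1) := by
    have h0 : Tendsto (fun m : ℕ => 1 + 1 / (m:ℝ)) atTop (𝓝 1) := by
      simpa using (tendsto_const_nhds (x := (1:ℝ))).add tendsto_one_div_atTop_nhds_zero_nat
    refine h0.congr' ?_
    filter_upwards [eventually_ge_atTop 1] with m hm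
    have hm' : (m:ℝ) ≠ 0 := Nat.cast_ne_zero.2 (by omega)
    field_simp
  refine tendsto_of_tendsto_of_tendsto_of_le_of_le' tendsto_const_nhds hup ?_ ?_
  · filter_upwards with m
    have h := S_ge m
    calc (1:ℝ) = ((m:ℝ) + 1) * (1 / ((m:ℝ) + 1)) := by
          have hp : ((m:ℝ) + 1) ≠ 0 := by positivity
          field_simp
      _ ≤ ((m:ℝ) + 1) * ∑' k : ℕ, 1 / ((m:ℝ) + k + 1) ^ 2 :=
          mul_le_mul_of_nonneg_left h (by positivity)
  · filter_upwards [eventually_ge_atTop 1] with m hm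
    have h := S_le m hm
    calc ((m:ℝ) + 1) * ∑' k : ℕ, 1 / ((m:ℝ) + k + 1) ^ 2
        ≤ ((m:ℝ) + 1) * (1 / (m:ℝ)) := mul_le_mul_of_nonneg_left h (by positivity)
      _ = ((m:ℝ) + 1) / (m:ℝ) := by ring


private lemma summable_toep {g : ℕ → ℝ} {C : ℝ} (hC : ∀ j, |g j| ≤ C) (m : ℕ) :
    Summable fun k : ℕ => g (m + k) / ((m:ℝ) + k + 1) ^ 2 := by
  refine Summable.of_norm_bounded ((basel_shift m).mul_left C) fun k => ?_
  show |g (m + k) / ((m:ℝ) + k + 1) ^ 2| ≤ C * (1 / ((m:ℝ) + k + 1) ^ 2)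
  rw [abs_div, abs_of_nonneg (by positivity : (0:ℝ) ≤ ((m:ℝ) + k + 1) ^ 2), mul_one_div]
  gcongr
  exact hC _

private lemma toeplitz {g : ℕ → ℝ} {L : ℝ} (hg : Tendsto g atTop (𝓝 L)) :
    Tendsto (fun m : ℕ => ((m:ℝ) + 1) * ∑' k : ℕ, g (m + k) / ((m:ℝ) + k + 1) ^ 2)
      atTop (𝓝 L) := by
  have hb : Tendsto (fun j => |g j - L|) atTop (𝓝 0) := by
    simpa using (hg.sub (tendsto_const_nhds (x := L))).abs
  obtain ⟨C, hC⟩ : ∃ C : ℝ, ∀ j, |g j - L| ≤ C := by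
    obtain ⟨C, hC⟩ := hb.bddAbove_range
    exact ⟨C, fun j => hC ⟨j, rfl⟩⟩
  have habs : ∀ m, Summable fun k : ℕ => |g (m + k) - L| / ((m:ℝ) + k + 1) ^ 2 := fun m =>
    summable_toep (g := fun j => |g j - L|) (C := C) (fun j => by
      rw [abs_abs]; exact hC j) m
  have s1 : ∀ m, Summable fun k : ℕ => (g (m + k) - L) / ((m:ℝ) + k + 1) ^ 2 := fun m =>
    summable_toep (g := fun j => g j - L) hC m
  have hsplit : ∀ m : ℕ, ((m:ℝ) + 1) * ∑' k : ℕ, g (m + k) / ((m:ℝ) + k + 1) ^ 2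
      = ((m:ℝ) + 1) * ∑' k : ℕ, (g (m + k) - L) / ((m:ℝ) + k + 1) ^ 2
        + L * (((m:ℝ) + 1) * ∑' k : ℕ, 1 / ((m:ℝ) + k + 1) ^ 2) := by
    intro m
    have s2 : Summable fun k : ℕ => L * (1 / ((m:ℝ) + k + 1) ^ 2) :=
      (basel_shift m).mul_left L
    have e : ∑' k : ℕ, g (m + k) / ((m:ℝ) + k + 1) ^ 2
        = ∑' k : ℕ, ((g (m + k) - L) / ((m:ℝ) + k + 1) ^ 2
            + L * (1 / ((m:ℝ) + k + 1) ^ 2)) := by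
      refine tsum_congr fun k => ?_
      rw [mul_one_div, ← add_div]
      ring_nf
    rw [e, Summable.tsum_add (s1 m) s2, tsum_mul_left]
    ring
  have hP : Tendsto
      (fun m : ℕ => ((m:ℝ) + 1) * ∑' k : ℕ, (g (m + k) - L) / ((m:ℝ) + k + 1) ^ 2)
      atTop (𝓝 0) := by
    rw [NormedAddCommGroup.tendsto_nhds_zero]
    intro ε hε
    obtain ⟨M, hM⟩ : ∃ M : ℕ, ∀ j ≥ M, |g j - L| ≤ ε / 3 := by
      have := hb.eventually (eventually_le_nhds (by positivity : (0:ℝ) < ε / 3))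
      exact this.exists_forall_of_atTop
    filter_upwards [eventually_ge_atTop M, eventually_ge_atTop 1] with m hmM hm1
    have hm1' : (1:ℝ) ≤ (m:ℝ) := by exact_mod_cast hm1
    have htsum_le : |∑' k : ℕ, (g (m + k) - L) / ((m:ℝ) + k + 1) ^ 2|
        ≤ (ε / 3) * ∑' k : ℕ, 1 / ((m:ℝ) + k + 1) ^ 2 := by
      calc |∑' k : ℕ, (g (m + k) - L) / ((m:ℝ) + k + 1) ^ 2|
          ≤ ∑' k : ℕ, |g (m + k) - L| / ((m:ℝ) + k + 1) ^ 2 := by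
            have := norm_tsum_le_tsum_norm (f := fun k : ℕ =>
              (g (m + k) - L) / ((m:ℝ) + k + 1) ^ 2) ?_
            · refine le_trans this (le_of_eq (tsum_congr fun k => ?_))
              rw [Real.norm_eq_abs, abs_div,
                abs_of_nonneg (by positivity : (0:ℝ) ≤ ((m:ℝ) + k + 1) ^ 2)]
            · refine (habs m).congr fun k => ?_
              rw [Real.norm_eq_abs, abs_div,
                abs_of_nonneg (by positivity : (0:ℝ) ≤ ((m:ℝ) + k + 1) ^ 2)]
        _ ≤ ∑' k : ℕ, (ε / 3) * (1 / ((m:ℝ) + k + 1) ^ 2) := by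
            refine Summable.tsum_le_tsum (fun k => ?_) (habs m) ((basel_shift m).mul_left _)
            rw [mul_one_div]
            gcongr
            exact hM _ (le_trans hmM (Nat.le_add_right m k))
        _ = (ε / 3) * ∑' k : ℕ, 1 / ((m:ℝ) + k + 1) ^ 2 := tsum_mul_left
    have hSle := S_le m hm1
    calc ‖((m:ℝ) + 1) * ∑' k : ℕ, (g (m + k) - L) / ((m:ℝ) + k + 1) ^ 2‖
        = ((m:ℝ) + 1) * |∑' k : ℕ, (g (m + k) - L) / ((m:ℝ) + k + 1) ^ 2| := by
          rw [Real.norm_eq_abs, abs_mul, abs_of_nonneg (by positivity : (0:ℝ) ≤ (m:ℝ) + 1)]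
      _ ≤ ((m:ℝ) + 1) * ((ε / 3) * ∑' k : ℕ, 1 / ((m:ℝ) + k + 1) ^ 2) :=
          mul_le_mul_of_nonneg_left htsum_le (by positivity)
      _ ≤ ((m:ℝ) + 1) * ((ε / 3) * (1 / (m:ℝ))) := by
          have h3 : (0:ℝ) ≤ ε / 3 := by positivity
          have := mul_le_mul_of_nonneg_left hSle h3
          exact mul_le_mul_of_nonneg_left this (by positivity)
      _ = (ε / 3) * (((m:ℝ) + 1) / (m:ℝ)) := by ring
      _ ≤ (ε / 3) * 2 := by
          have : ((m:ℝ) + 1) / (m:ℝ) ≤ 2 := by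
            rw [div_le_iff₀ (by linarith)]
            linarith
          gcongr
      _ < ε := by linarith
  have h2 : Tendsto
      (fun m : ℕ => L * (((m:ℝ) + 1) * ∑' k : ℕ, 1 / ((m:ℝ) + k + 1) ^ 2))
      atTop (𝓝 (L * 1)) := tendsto_S.const_mul L
  have := hP.add h2
  rw [zero_add, mul_one] at this
  exact this.congr fun m => (hsplit m).symm

private lemma kron {u : ℕ → ℝ}
    (hu : ∀ m : ℕ, Summable fun k : ℕ => u (m + k) / ((m:ℝ) + k + 1))
    {l : ℝ} (hc : Tendsto (fun n : ℕ => ∑ k ∈ Finset.range n, u k) atTop (𝓝 l)) :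
    Tendsto (fun m : ℕ => ((m:ℝ) + 1) * ∑' k : ℕ, u (m + k) / ((m:ℝ) + k + 1))
      atTop (𝓝 0) := by
  set c : ℕ → ℝ := fun n => ∑ k ∈ Finset.range n, u k with hcdef
  have hcauchy : CauchySeq c := hc.cauchySeq
  rw [Metric.tendsto_atTop]
  intro ε hε
  obtain ⟨M, hM⟩ := Metric.cauchySeq_iff'.1 hcauchy (ε/4) (by positivity)
  refine ⟨M, fun m hmM => ?_⟩
  set a : ℕ → ℝ := fun k => 1 / ((m:ℝ) + k + 1) with hadef
  set v : ℕ → ℝ := fun N => c (m + N) - c m with hvdef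
  have ha_nonneg : ∀ k, 0 ≤ a k := fun k => by
    simp only [hadef]; positivity
  have ha_anti : ∀ k, a (k + 1) ≤ a k := fun k => by
    simp only [hadef]
    apply one_div_le_one_div_of_le (by positivity)
    push_cast
    linarith
  have hv : ∀ N, |v N| ≤ ε / 2 := by
    intro N
    have h1 := hM (m + N) (le_trans hmM (Nat.le_add_right m N))
    have h2 := hM m hmM
    rw [Real.dist_eq] at h1 h2
    simp only [hvdef]
    calc |c (m + N) - c m| = |(c (m + N) - c M) - (c m - c M)| := by ring_nf
      _ ≤ |c (m + N) - c M| + |c m - c M| := abs_sub _ _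
      _ ≤ ε / 4 + ε / 4 := add_le_add h1.le h2.le
      _ = ε / 2 := by ring
  have habel : ∀ N : ℕ, ∑ k ∈ Finset.range N, u (m + k) / ((m:ℝ) + k + 1)
      = v N * a N + ∑ k ∈ Finset.range N, v (k + 1) * (a k - a (k + 1)) := by
    intro N
    induction N with
    | zero => simp [hvdef]
    | succ N ih =>
      rw [Finset.sum_range_succ, Finset.sum_range_succ, ih]
      have hterm : u (m + N) / ((m:ℝ) + N + 1) = (v (N + 1) - v N) * a N := by
        have h1 : v (N + 1) - v N = u (m + N) := by
          simp only [hvdef, hcdef]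
          rw [show m + (N + 1) = (m + N) + 1 from rfl, Finset.sum_range_succ]
          ring
        rw [h1, hadef, mul_one_div]
      rw [hterm]
      ring
  have hPb : ∀ N : ℕ, |∑ k ∈ Finset.range N, u (m + k) / ((m:ℝ) + k + 1)| ≤ (ε / 2) * a 0 := by
    intro N
    rw [habel N]
    have htele : ∑ k ∈ Finset.range N, (a k - a (k + 1)) = a 0 - a N :=
      Finset.sum_range_sub' a N
    calc |v N * a N + ∑ k ∈ Finset.range N, v (k + 1) * (a k - a (k + 1))|
        ≤ |v N * a N| + |∑ k ∈ Finset.range N, v (k + 1) * (a k - a (k + 1))| := abs_add_le _ _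
      _ ≤ |v N| * a N + ∑ k ∈ Finset.range N, |v (k + 1)| * (a k - a (k + 1)) := by
          refine add_le_add (le_of_eq ?_) ?_
          · rw [abs_mul, abs_of_nonneg (ha_nonneg N)]
          · refine le_trans (Finset.abs_sum_le_sum_abs _ _) ?_
            refine Finset.sum_le_sum fun k _ => ?_
            rw [abs_mul, abs_of_nonneg (sub_nonneg.2 (ha_anti k))]
      _ ≤ (ε / 2) * a N + ∑ k ∈ Finset.range N, (ε / 2) * (a k - a (k + 1)) := by
          refine add_le_add (mul_le_mul_of_nonneg_right (hv N) (ha_nonneg N)) ?_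
          refine Finset.sum_le_sum fun k _ => ?_
          exact mul_le_mul_of_nonneg_right (hv (k + 1)) (sub_nonneg.2 (ha_anti k))
      _ = (ε / 2) * a N + (ε / 2) * (a 0 - a N) := by rw [← Finset.mul_sum, htele]
      _ = (ε / 2) * a 0 := by ring
  have hts := (hu m).hasSum.tendsto_sum_nat
  have hTle : |∑' k : ℕ, u (m + k) / ((m:ℝ) + k + 1)| ≤ (ε / 2) * a 0 :=
    le_of_tendsto hts.abs (Eventually.of_forall hPb)
  rw [Real.dist_eq, sub_zero, abs_mul,
    abs_of_nonneg (by positivity : (0:ℝ) ≤ (m:ℝ) + 1)]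
  have ha0 : a 0 = 1 / ((m:ℝ) + 1) := by simp [hadef]
  calc ((m:ℝ) + 1) * |∑' k : ℕ, u (m + k) / ((m:ℝ) + k + 1)|
      ≤ ((m:ℝ) + 1) * ((ε / 2) * a 0) := mul_le_mul_of_nonneg_left hTle (by positivity)
    _ = ε / 2 := by
        rw [ha0]
        field_simp
    _ < ε := by linarith

private lemma memLp_two_condExp {Ω : Type*} {m m0 : MeasurableSpace Ω} {μ : Measure Ω}
    [IsFiniteMeasure μ] (hm : m ≤ m0) {g : Ω → ℝ} (hg : MemLp g 2 μ) :
    MemLp (μ[g|m]) 2 μ := by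
  have hint : Integrable g μ := hg.integrable one_le_two
  set G : Lp ℝ 2 μ := hg.toLp g with hGdef
  have hae : (condExpL2 ℝ ℝ hm G : Ω → ℝ) =ᵐ[μ] μ[g|m] := by
    refine ae_eq_condExp_of_forall_setIntegral_eq hm hint ?_ ?_ ?_
    · intro s _ _
      exact (integrable_condExpL2_of_isFiniteMeasure hm).integrableOn
    · intro s hs hμs
      rw [integral_condExpL2_eq hm G hs hμs.ne]
      exact setIntegral_congr_ae (hm s hs)
        ((hg.coeFn_toLp).mono fun ω hω _ => hω)
    · exact lpMeas.aestronglyMeasurable (condExpL2 ℝ ℝ hm G)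
  exact (Lp.memLp ((condExpL2 ℝ ℝ hm G : Ω →₂[μ] ℝ))).ae_eq hae

private lemma ae_summable {Ω : Type*} {m0 : MeasurableSpace Ω} {μ : Measure Ω}
    (g : ℕ → Ω → ℝ) (hm : ∀ j, AEStronglyMeasurable (g j) μ)
    (hfin : ∑' j, eLpNorm (g j) 1 μ ≠ ∞) :
    ∀ᵐ ω ∂μ, Summable fun j => g j ω := by
  have h1 : ∫⁻ ω, ∑' j, (‖g j ω‖₊ : ℝ≥0∞) ∂μ = ∑' j, ∫⁻ ω, (‖g j ω‖₊ : ℝ≥0∞) ∂μ :=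
    lintegral_tsum fun j => (hm j).enorm
  have h2 : ∫⁻ ω, ∑' j, (‖g j ω‖₊ : ℝ≥0∞) ∂μ ≠ ∞ := by
    rw [h1]
    have : ∀ j, ∫⁻ ω, (‖g j ω‖₊ : ℝ≥0∞) ∂μ = eLpNorm (g j) 1 μ := fun j =>
      by rw [eLpNorm_one_eq_lintegral_enorm]; rfl
    simp_rw [this]
    exact hfin
  have h3 := ae_lt_top' (AEMeasurable.ennreal_tsum fun j => (hm j).enorm) h2
  filter_upwards [h3] with ω hω
  have h4 : Summable fun j => ‖g j ω‖₊ := ENNReal.tsum_coe_ne_top_iff_summable.1 hω.ne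
  exact Summable.of_nnnorm h4
theorem stmt1
    {Ω : Type*} {m0 : MeasurableSpace Ω} {μ : Measure Ω} [IsProbabilityMeasure μ]
    (𝒢 : ℕ → MeasurableSpace Ω) (h𝒢mono : Monotone 𝒢) (h𝒢le : ∀ n, 𝒢 n ≤ m0)
    (Y : ℕ → Ω → ℝ) (hadp : ∀ n, Measurable[𝒢 n] (Y n))
    (hL2 : ∀ n, MemLp (Y n) 2 μ)
    (hsum : Summable (fun n : ℕ => (∫ ω, (Y (n + 1) ω) ^ 2 ∂μ) / ((n + 1 : ℝ)) ^ 2))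
    (Ylim : Ω → ℝ)
    (hce : ∀ᵐ ω ∂μ, Tendsto (fun n => (μ[Y (n + 1)|𝒢 n]) ω) atTop (𝓝 (Ylim ω))) :
    ∀ᵐ ω ∂μ, Tendsto
      (fun n : ℕ => (n : ℝ) * ∑' k : ℕ, Y (n + k) ω / ((n + k : ℕ) : ℝ) ^ 2)
      atTop (𝓝 (Ylim ω)) := by
  classical
  set b : ℕ → Ω → ℝ := fun n => μ[Y (n + 1)|𝒢 n] with hbdef
  set d : ℕ → Ω → ℝ := fun n ω => Y (n + 1) ω - b n ω with hddef
  set f : ℕ → Ω → ℝ := fun n ω => ∑ k ∈ Finset.range n, d k ω / ((k : ℝ) + 1) with hfdef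
  have hYi : ∀ n, Integrable (Y n) μ := fun n => (hL2 n).integrable one_le_two
  have hbm : ∀ n, StronglyMeasurable[𝒢 n] (b n) := fun n => stronglyMeasurable_condExp
  have hbi : ∀ n, Integrable (b n) μ := fun n => integrable_condExp
  have hbL2 : ∀ n, MemLp (b n) 2 μ := fun n => memLp_two_condExp (h𝒢le n) (hL2 (n + 1))
  have hdL2 : ∀ n, MemLp (d n) 2 μ := fun n => (hL2 (n + 1)).sub (hbL2 n)
  have hdm : ∀ n, StronglyMeasurable[𝒢 (n + 1)] (d n) := fun n =>
    ((hadp (n + 1)).stronglyMeasurable).sub ((hbm n).mono (h𝒢mono (Nat.le_succ n)))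
  have hdi : ∀ n, Integrable (d n) μ := fun n => (hdL2 n).integrable one_le_two
  have hsm_div : ∀ (g : Ω → ℝ) (m' : MeasurableSpace Ω) (c : ℝ),
      StronglyMeasurable[m'] g → StronglyMeasurable[m'] (fun ω => g ω / c) := by
    intro g m' c hg
    simpa [div_eq_mul_inv] using hg.mul_const c⁻¹
  have hml_div : ∀ (g : Ω → ℝ) (c : ℝ), MemLp g 2 μ → MemLp (fun ω => g ω / c) 2 μ := by
    intro g c hg
    have := hg.const_mul c⁻¹
    refine this.ae_eq (Eventually.of_forall fun ω => ?_)
    show c⁻¹ * g ω = g ω / c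
    rw [div_eq_mul_inv, mul_comm]
  have hfm : ∀ n, StronglyMeasurable[𝒢 n] (f n) := by
    intro n
    apply Finset.stronglyMeasurable_fun_sum
    intro k hk
    exact hsm_div _ _ _ ((hdm k).mono (h𝒢mono (Finset.mem_range.1 hk)))
  have hfL2 : ∀ n, MemLp (f n) 2 μ := by
    intro n
    exact memLp_finset_sum _ fun k _ => hml_div _ _ (hdL2 k)
  have hfi : ∀ n, Integrable (f n) μ := fun n => (hfL2 n).integrable one_le_two
  have hmul : ∀ (g h : Ω → ℝ), MemLp g 2 μ → MemLp h 2 μ →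
      Integrable (fun ω => g ω * h ω) μ := by
    intro g h hg hh
    have hsm : MemLp (g • h) 1 μ := hh.smul hg (p := 2) (q := 2) (r := 1)
    rw [memLp_one_iff_integrable] at hsm
    exact hsm
  have hproj : ∀ (n : ℕ) (g : Ω → ℝ), StronglyMeasurable[𝒢 n] g → MemLp g 2 μ →
      ∫ ω, g ω * Y (n + 1) ω ∂μ = ∫ ω, g ω * b n ω ∂μ := by
    intro n g hgm hg2
    have hint : Integrable (fun ω => g ω * Y (n + 1) ω) μ := hmul _ _ hg2 (hL2 (n + 1))
    have h2 : μ[(fun ω => g ω * Y (n + 1) ω)|𝒢 n] =ᵐ[μ] fun ω => g ω * (μ[Y (n + 1)|𝒢 n]) ω := by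
      have := condExp_mul_of_stronglyMeasurable_left (m := 𝒢 n) (μ := μ) hgm
        (f := g) (g := Y (n + 1)) hint (hYi (n + 1))
      exact this
    calc ∫ ω, g ω * Y (n + 1) ω ∂μ
        = ∫ ω, (μ[(fun ω => g ω * Y (n + 1) ω)|𝒢 n]) ω ∂μ := (integral_condExp (h𝒢le n)).symm
      _ = ∫ ω, g ω * b n ω ∂μ := integral_congr_ae h2
  have hfd : ∀ n, ∫ ω, f n ω * d n ω ∂μ = 0 := by
    intro n
    have h1 : ∫ ω, f n ω * Y (n + 1) ω ∂μ = ∫ ω, f n ω * b n ω ∂μ :=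
      hproj n (f n) (hfm n) (hfL2 n)
    have h2 : ∀ ω, f n ω * d n ω = f n ω * Y (n + 1) ω - f n ω * b n ω := by
      intro ω
      simp only [hddef]
      ring
    calc ∫ ω, f n ω * d n ω ∂μ
        = ∫ ω, (f n ω * Y (n + 1) ω - f n ω * b n ω) ∂μ := by
          exact integral_congr_ae (Eventually.of_forall h2)
      _ = ∫ ω, f n ω * Y (n + 1) ω ∂μ - ∫ ω, f n ω * b n ω ∂μ :=
          integral_sub (hmul _ _ (hfL2 n) (hL2 (n + 1))) (hmul _ _ (hfL2 n) (hbL2 n))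
      _ = 0 := by rw [h1]; ring
  have hd2 : ∀ n, ∫ ω, d n ω * d n ω ∂μ ≤ ∫ ω, (Y (n + 1) ω) ^ 2 ∂μ := by
    intro n
    have hYb : ∫ ω, b n ω * Y (n + 1) ω ∂μ = ∫ ω, b n ω * b n ω ∂μ :=
      hproj n (b n) (hbm n) (hbL2 n)
    have expand : ∀ ω, d n ω * d n ω
        = (Y (n + 1) ω) ^ 2 - 2 * (b n ω * Y (n + 1) ω) + b n ω * b n ω := by
      intro ω
      simp only [hddef]
      ring
    have hIY2 : Integrable (fun ω => (Y (n + 1) ω) ^ 2) μ := by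
      have := hmul _ _ (hL2 (n + 1)) (hL2 (n + 1))
      exact this.congr (Eventually.of_forall fun ω => (pow_two (Y (n + 1) ω)).symm)
    have hIbY : Integrable (fun ω => b n ω * Y (n + 1) ω) μ := hmul _ _ (hbL2 n) (hL2 (n + 1))
    have hIbb : Integrable (fun ω => b n ω * b n ω) μ := hmul _ _ (hbL2 n) (hbL2 n)
    have hbb_nonneg : 0 ≤ ∫ ω, b n ω * b n ω ∂μ :=
      integral_nonneg fun ω => mul_self_nonneg _
    calc ∫ ω, d n ω * d n ω ∂μ
        = ∫ ω, ((Y (n + 1) ω) ^ 2 - 2 * (b n ω * Y (n + 1) ω) + b n ω * b n ω) ∂μ :=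
          integral_congr_ae (Eventually.of_forall expand)
      _ = (∫ ω, (Y (n + 1) ω) ^ 2 ∂μ) - 2 * ∫ ω, b n ω * Y (n + 1) ω ∂μ
            + ∫ ω, b n ω * b n ω ∂μ := by
          have hsub : Integrable (fun ω => Y (n + 1) ω ^ 2 - 2 * (b n ω * Y (n + 1) ω)) μ := by
            exact hIY2.sub (hIbY.const_mul 2)
          rw [integral_add hsub hIbb, integral_sub hIY2 (by exact hIbY.const_mul 2),
            integral_const_mul]
      _ = (∫ ω, (Y (n + 1) ω) ^ 2 ∂μ) - ∫ ω, b n ω * b n ω ∂μ := by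
          rw [hYb]; ring
      _ ≤ ∫ ω, (Y (n + 1) ω) ^ 2 ∂μ := by linarith
  -- second moment bound for the martingale
  have hf2 : ∀ n, ∫ ω, f n ω * f n ω ∂μ
      ≤ ∑ k ∈ Finset.range n, (∫ ω, (Y (k + 1) ω) ^ 2 ∂μ) / ((k : ℝ) + 1) ^ 2 := by
    intro n
    induction n with
    | zero =>
      simp only [hfdef, Finset.range_zero, Finset.sum_empty]
      simp
    | succ n ih =>
      have hstep : ∀ ω, f (n + 1) ω = f n ω + d n ω / ((n : ℝ) + 1) := by
        intro ω
        simp only [hfdef, Finset.sum_range_succ]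
      have hexp : ∀ ω, f (n + 1) ω * f (n + 1) ω
          = f n ω * f n ω + (2 / ((n : ℝ) + 1)) * (f n ω * d n ω)
            + (1 / ((n : ℝ) + 1) ^ 2) * (d n ω * d n ω) := by
        intro ω
        rw [hstep ω]
        have hne : ((n : ℝ) + 1) ≠ 0 := by positivity
        field_simp
        ring
      have hIff : Integrable (fun ω => f n ω * f n ω) μ := hmul _ _ (hfL2 n) (hfL2 n)
      have hIfd : Integrable (fun ω => f n ω * d n ω) μ := hmul _ _ (hfL2 n) (hdL2 n)
      have hIdd : Integrable (fun ω => d n ω * d n ω) μ := hmul _ _ (hdL2 n) (hdL2 n)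
      have hI1 : Integrable (fun ω => f n ω * f n ω
          + (2 / ((n : ℝ) + 1)) * (f n ω * d n ω)) μ := by
        exact hIff.add (hIfd.const_mul _)
      calc ∫ ω, f (n + 1) ω * f (n + 1) ω ∂μ
          = ∫ ω, (f n ω * f n ω + (2 / ((n : ℝ) + 1)) * (f n ω * d n ω)
              + (1 / ((n : ℝ) + 1) ^ 2) * (d n ω * d n ω)) ∂μ :=
            integral_congr_ae (Eventually.of_forall hexp)
        _ = (∫ ω, f n ω * f n ω ∂μ) + (2 / ((n : ℝ) + 1)) * ∫ ω, f n ω * d n ω ∂μ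
              + (1 / ((n : ℝ) + 1) ^ 2) * ∫ ω, d n ω * d n ω ∂μ := by
            rw [integral_add hI1 (by exact hIdd.const_mul _),
              integral_add hIff (by exact hIfd.const_mul _), integral_const_mul,
              integral_const_mul]
        _ = (∫ ω, f n ω * f n ω ∂μ)
              + (1 / ((n : ℝ) + 1) ^ 2) * ∫ ω, d n ω * d n ω ∂μ := by
            rw [hfd n]; ring
        _ ≤ (∑ k ∈ Finset.range n, (∫ ω, (Y (k + 1) ω) ^ 2 ∂μ) / ((k : ℝ) + 1) ^ 2)
              + (1 / ((n : ℝ) + 1) ^ 2) * ∫ ω, (Y (n + 1) ω) ^ 2 ∂μ := by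
            have h2 := hd2 n
            have hpos : (0:ℝ) ≤ 1 / ((n : ℝ) + 1) ^ 2 := by positivity
            exact add_le_add ih (mul_le_mul_of_nonneg_left h2 hpos)
        _ = ∑ k ∈ Finset.range (n + 1), (∫ ω, (Y (k + 1) ω) ^ 2 ∂μ) / ((k : ℝ) + 1) ^ 2 := by
            rw [Finset.sum_range_succ]
            ring
  -- the constant bounding the series
  set C : ℝ := ∑' k : ℕ, (∫ ω, (Y (k + 1) ω) ^ 2 ∂μ) / ((k : ℝ) + 1) ^ 2 with hCdef
  have hterm_nonneg : ∀ k : ℕ, 0 ≤ (∫ ω, (Y (k + 1) ω) ^ 2 ∂μ) / ((k : ℝ) + 1) ^ 2 := by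
    intro k
    have := integral_nonneg (μ := μ) (f := fun ω => (Y (k + 1) ω) ^ 2) fun ω => sq_nonneg _
    positivity
  have hC0 : 0 ≤ C := tsum_nonneg hterm_nonneg
  have hCpart : ∀ n, ∑ k ∈ Finset.range n, (∫ ω, (Y (k + 1) ω) ^ 2 ∂μ) / ((k : ℝ) + 1) ^ 2 ≤ C :=
    fun n => Summable.sum_le_tsum _ (fun k _ => hterm_nonneg k) hsum
  -- L¹ bound
  have hbdd : ∀ n, eLpNorm (f n) 1 μ ≤ ENNReal.ofReal (1 + C) := by
    intro n
    have hIff : Integrable (fun ω => f n ω * f n ω) μ := hmul _ _ (hfL2 n) (hfL2 n)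
    have habs : ∫ ω, |f n ω| ∂μ ≤ 1 + C := by
      have h1 : ∫ ω, |f n ω| ∂μ ≤ ∫ ω, (1 + f n ω * f n ω) ∂μ := by
        refine integral_mono_ae ((hfi n).abs) (by exact (integrable_const 1).add hIff) ?_
        refine Eventually.of_forall fun ω => ?_
        show |f n ω| ≤ 1 + f n ω * f n ω
        nlinarith [sq_nonneg (|f n ω| - 1), abs_mul_abs_self (f n ω)]
      have h2 : ∫ ω, (1 + f n ω * f n ω) ∂μ = 1 + ∫ ω, f n ω * f n ω ∂μ := by
        rw [integral_add (integrable_const 1) hIff, integral_const]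
        simp
      rw [h2] at h1
      have := le_trans (hf2 n) (hCpart n)
      linarith
    have heq : eLpNorm (f n) 1 μ = ENNReal.ofReal (∫ ω, |f n ω| ∂μ) := by
      rw [eLpNorm_one_eq_lintegral_enorm,
        ← ofReal_integral_norm_eq_lintegral_enorm (hfi n)]
      simp [Real.norm_eq_abs]
    rw [heq]
    exact ENNReal.ofReal_le_ofReal habs
  -- the martingale property and a.s. convergence
  set ℱ : Filtration ℕ m0 := ⟨𝒢, h𝒢mono, h𝒢le⟩ with hℱdef
  have hmart : Martingale f ℱ μ := by
    refine martingale_nat (fun n => hfm n) hfi fun n => ?_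
    have hstep : f (n + 1) = f n + fun ω => d n ω / ((n : ℝ) + 1) := by
      funext ω
      simp only [hfdef, Finset.sum_range_succ]
      rfl
    have hdd : Integrable (fun ω => d n ω / ((n : ℝ) + 1)) μ := by
      exact (hdi n).div_const _
    have h1 : μ[f (n + 1)|𝒢 n] =ᵐ[μ] μ[f n|𝒢 n] + μ[fun ω => d n ω / ((n : ℝ) + 1)|𝒢 n] := by
      rw [hstep]
      exact condExp_add (hfi n) hdd _
    have h2 : μ[f n|𝒢 n] = f n := condExp_of_stronglyMeasurable (h𝒢le n) (hfm n) (hfi n)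
    have h3 : μ[fun ω => d n ω / ((n : ℝ) + 1)|𝒢 n] =ᵐ[μ] 0 := by
      have hsmul : (fun ω => d n ω / ((n : ℝ) + 1)) = ((n : ℝ) + 1)⁻¹ • d n := by
        funext ω
        simp [div_eq_inv_mul]
      have h4 : μ[((n : ℝ) + 1)⁻¹ • d n|𝒢 n] =ᵐ[μ] ((n : ℝ) + 1)⁻¹ • μ[d n|𝒢 n] :=
        condExp_smul _ _ _
      have h5 : μ[d n|𝒢 n] =ᵐ[μ] 0 := by
        have h6 : μ[d n|𝒢 n] =ᵐ[μ] μ[Y (n + 1)|𝒢 n] - μ[b n|𝒢 n] := by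
          have : d n = Y (n + 1) - b n := by funext ω; simp [hddef]
          rw [this]
          exact condExp_sub (hYi (n + 1)) (hbi n) _
        have h7 : μ[b n|𝒢 n] = b n := condExp_of_stronglyMeasurable (h𝒢le n) (hbm n) (hbi n)
        refine h6.trans ?_
        rw [h7, hbdef]
        filter_upwards with ω
        simp
      rw [hsmul]
      refine h4.trans ?_
      filter_upwards [h5] with ω h5ω
      simp [h5ω]
    refine EventuallyEq.symm ?_
    refine h1.trans ?_
    rw [h2]
    filter_upwards [h3] with ω h3ω
    simp [h3ω]
  have hconv : ∀ᵐ ω ∂μ, ∃ c, Tendsto (fun n => f n ω) atTop (𝓝 c) := by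
    refine hmart.submartingale.exists_ae_tendsto_of_bdd (R := (1 + C).toNNReal) ?_
    intro n
    exact le_trans (hbdd n) le_rfl
  -- elementary integral bound for Y in L¹
  have hYsnorm : ∀ j : ℕ, eLpNorm (Y (j + 1)) 1 μ
      ≤ ENNReal.ofReal (1 + ∫ ω, (Y (j + 1) ω) ^ 2 ∂μ) := by
    intro j
    have hsq : Integrable (fun ω => (Y (j + 1) ω) ^ 2) μ := by
      have := hmul _ _ (hL2 (j + 1)) (hL2 (j + 1))
      exact this.congr (Eventually.of_forall fun ω => (pow_two (Y (j + 1) ω)).symm)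
    rw [eLpNorm_one_eq_lintegral_enorm]
    have hpt : ∀ ω, (‖Y (j + 1) ω‖₊ : ℝ≥0∞) ≤ ENNReal.ofReal (1 + (Y (j + 1) ω) ^ 2) := by
      intro ω
      rw [← enorm_eq_nnnorm, Real.enorm_eq_ofReal_abs]
      refine ENNReal.ofReal_le_ofReal ?_
      nlinarith [sq_nonneg (|Y (j + 1) ω| - 1), sq_abs (Y (j + 1) ω)]
    calc ∫⁻ ω, (‖Y (j + 1) ω‖₊ : ℝ≥0∞) ∂μ
        ≤ ∫⁻ ω, ENNReal.ofReal (1 + (Y (j + 1) ω) ^ 2) ∂μ := lintegral_mono hpt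
      _ = ENNReal.ofReal (∫ ω, (1 + (Y (j + 1) ω) ^ 2) ∂μ) := by
          rw [← ofReal_integral_eq_lintegral_ofReal (by exact (integrable_const 1).add hsq)
            (Eventually.of_forall fun ω => by positivity)]
      _ = ENNReal.ofReal (1 + ∫ ω, (Y (j + 1) ω) ^ 2 ∂μ) := by
          rw [integral_add (integrable_const 1) hsq, integral_const]
          simp
  have hBsum : Summable (fun j : ℕ =>
      (1 + ∫ ω, (Y (j + 1) ω) ^ 2 ∂μ) * (1 / ((j : ℝ) + 1) ^ 2)) := by
    refine (basel.add hsum).congr fun j => ?_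
    show 1 / ((j : ℝ) + 1) ^ 2 + (∫ ω, (Y (j + 1) ω) ^ 2 ∂μ) / ((j : ℝ) + 1) ^ 2 = _
    ring
  have hkey : ∀ (X : ℕ → Ω → ℝ), (∀ j, AEStronglyMeasurable (X j) μ) →
      (∀ j, eLpNorm (X j) 1 μ ≤ eLpNorm (Y (j + 1)) 1 μ) →
      ∀ᵐ ω ∂μ, Summable fun j => X j ω / ((j : ℝ) + 1) ^ 2 := by
    intro X hXm hXb
    refine ae_summable (fun j ω => X j ω / ((j : ℝ) + 1) ^ 2)
      (fun j => by
        have h := (hXm j).mul_const ((((j : ℝ) + 1) ^ 2)⁻¹)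
        refine h.congr (Eventually.of_forall fun ω => ?_)
        exact (div_eq_mul_inv _ _).symm) ?_
    have h1 : ∀ j : ℕ, eLpNorm (fun ω => X j ω / ((j : ℝ) + 1) ^ 2) 1 μ
        ≤ ENNReal.ofReal ((1 + ∫ ω, (Y (j + 1) ω) ^ 2 ∂μ) * (1 / ((j : ℝ) + 1) ^ 2)) := by
      intro j
      have heq : eLpNorm (fun ω => X j ω / ((j : ℝ) + 1) ^ 2) 1 μ
          = (‖((((j : ℝ) + 1) ^ 2)⁻¹ : ℝ)‖₊ : ℝ≥0∞) * eLpNorm (X j) 1 μ := by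
        rw [← enorm_eq_nnnorm, ← eLpNorm_const_smul ((((j : ℝ) + 1) ^ 2)⁻¹ : ℝ) (X j) 1 μ]
        refine eLpNorm_congr_ae (Eventually.of_forall fun ω => ?_)
        show X j ω / ((j : ℝ) + 1) ^ 2 = ((((j : ℝ) + 1) ^ 2)⁻¹ : ℝ) • X j ω
        rw [smul_eq_mul, div_eq_inv_mul]
      rw [heq]
      have hc : (‖((((j : ℝ) + 1) ^ 2)⁻¹ : ℝ)‖₊ : ℝ≥0∞)
          = ENNReal.ofReal (1 / ((j : ℝ) + 1) ^ 2) := by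
        rw [← enorm_eq_nnnorm, Real.enorm_eq_ofReal_abs, abs_of_nonneg (by positivity), one_div]
      rw [hc]
      calc ENNReal.ofReal (1 / ((j : ℝ) + 1) ^ 2) * eLpNorm (X j) 1 μ
          ≤ ENNReal.ofReal (1 / ((j : ℝ) + 1) ^ 2)
              * ENNReal.ofReal (1 + ∫ ω, (Y (j + 1) ω) ^ 2 ∂μ) :=
            mul_le_mul_right ((hXb j).trans (hYsnorm j)) _
        _ = ENNReal.ofReal ((1 + ∫ ω, (Y (j + 1) ω) ^ 2 ∂μ) * (1 / ((j : ℝ) + 1) ^ 2)) := by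
            rw [← ENNReal.ofReal_mul (show (0:ℝ) ≤ 1 / ((j : ℝ) + 1) ^ 2 by positivity)]
            congr 1
            ring
    have hnn : ∀ j : ℕ, 0 ≤ (1 + ∫ ω, (Y (j + 1) ω) ^ 2 ∂μ) * (1 / ((j : ℝ) + 1) ^ 2) := by
      intro j
      have h0 : 0 ≤ ∫ ω, (Y (j + 1) ω) ^ 2 ∂μ := integral_nonneg fun ω => sq_nonneg _
      have h1 : (0:ℝ) ≤ 1 / ((j : ℝ) + 1) ^ 2 := by positivity
      nlinarith
    have h2 : ∑' j, eLpNorm (fun ω => X j ω / ((j : ℝ) + 1) ^ 2) 1 μ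
        ≤ ENNReal.ofReal (∑' j, (1 + ∫ ω, (Y (j + 1) ω) ^ 2 ∂μ) * (1 / ((j : ℝ) + 1) ^ 2)) := by
      rw [ENNReal.ofReal_tsum_of_nonneg hnn hBsum]
      exact ENNReal.tsum_le_tsum h1
    exact ne_top_of_le_ne_top ENNReal.ofReal_ne_top h2
  have hsumYae := hkey (fun j => Y (j + 1)) (fun j => (hL2 (j + 1)).aestronglyMeasurable)
    (fun j => le_rfl)
  have hsumbae := hkey b (fun j => ((hbm j).mono (h𝒢le j)).aestronglyMeasurable)
    (fun j => eLpNorm_one_condExp_le_eLpNorm _)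
  -- pathwise conclusion
  filter_upwards [hce, hconv, hsumYae, hsumbae] with ω hceω hconvω hsY hsb
  obtain ⟨cl, hcl⟩ := hconvω
  have hsd : Summable fun j : ℕ => d j ω / ((j : ℝ) + 1) ^ 2 := by
    refine (hsY.sub hsb).congr fun j => ?_
    show Y (j + 1) ω / ((j : ℝ) + 1) ^ 2 - b j ω / ((j : ℝ) + 1) ^ 2
        = d j ω / ((j : ℝ) + 1) ^ 2
    rw [← sub_div]
  have hshift : ∀ (F : ℕ → ℝ), Summable (fun j => F j / ((j : ℝ) + 1) ^ 2) →
      ∀ m : ℕ, Summable fun k : ℕ => F (m + k) / ((m : ℝ) + k + 1) ^ 2 := by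
    intro F hF m
    refine (summable_shift hF m).congr fun k => ?_
    show F (m + k) / (((m + k : ℕ) : ℝ) + 1) ^ 2 = F (m + k) / ((m : ℝ) + k + 1) ^ 2
    congr 1
    push_cast
    ring
  have hsb' := hshift (fun j => b j ω) hsb
  have hsd' := hshift (fun j => d j ω) hsd
  -- the martingale (Kronecker) part
  set u : ℕ → ℝ := fun j => d j ω / ((j : ℝ) + 1) with hudef
  have huS : ∀ m : ℕ, Summable fun k : ℕ => u (m + k) / ((m : ℝ) + k + 1) := by
    intro m
    refine (hsd' m).congr fun k => ?_
    show d (m + k) ω / ((m : ℝ) + k + 1) ^ 2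
        = (d (m + k) ω / (((m + k : ℕ) : ℝ) + 1)) / ((m : ℝ) + k + 1)
    have hc : ((m + k : ℕ) : ℝ) + 1 = (m : ℝ) + k + 1 := by push_cast; ring
    rw [hc, pow_two, ← div_div]
  have hcpart : Tendsto (fun n : ℕ => ∑ k ∈ Finset.range n, u k) atTop (𝓝 cl) := hcl
  have hdtend := kron huS hcpart
  have hdtend' : Tendsto
      (fun m : ℕ => ((m : ℝ) + 1) * ∑' k : ℕ, d (m + k) ω / ((m : ℝ) + k + 1) ^ 2)
      atTop (𝓝 0) := by
    refine hdtend.congr fun m => ?_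
    congr 1
    refine tsum_congr fun k => ?_
    show u (m + k) / ((m : ℝ) + k + 1)
        = d (m + k) ω / ((m : ℝ) + k + 1) ^ 2
    have hc : ((m + k : ℕ) : ℝ) + 1 = (m : ℝ) + k + 1 := by push_cast; ring
    show (d (m + k) ω / (((m + k : ℕ) : ℝ) + 1)) / ((m : ℝ) + k + 1) = _
    rw [hc, pow_two, ← div_div]
  have hbtend : Tendsto
      (fun m : ℕ => ((m : ℝ) + 1) * ∑' k : ℕ, b (m + k) ω / ((m : ℝ) + k + 1) ^ 2)
      atTop (𝓝 (Ylim ω)) := toeplitz (g := fun j => b j ω) hceω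
  have hGm : Tendsto
      (fun m : ℕ => ((m : ℝ) + 1) * ∑' k : ℕ, Y (m + k + 1) ω / ((m : ℝ) + k + 1) ^ 2)
      atTop (𝓝 (Ylim ω)) := by
    have hadd := hbtend.add hdtend'
    rw [add_zero] at hadd
    refine hadd.congr fun m => ?_
    rw [← mul_add, ← Summable.tsum_add (hsb' m) (hsd' m)]
    congr 1
    refine tsum_congr fun k => ?_
    rw [← add_div]
    congr 1
    simp only [hddef]
    ring
  have hG' : Tendsto
      (fun n : ℕ => (((n - 1 : ℕ) : ℝ) + 1)
        * ∑' k : ℕ, Y ((n - 1) + k + 1) ω / (((n - 1 : ℕ) : ℝ) + k + 1) ^ 2)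
      atTop (𝓝 (Ylim ω)) := hGm.comp (tendsto_sub_atTop_nat 1)
  refine hG'.congr' ?_
  filter_upwards [eventually_ge_atTop 1] with n hn
  obtain ⟨m, rfl⟩ : ∃ m, n = m + 1 := ⟨n - 1, by omega⟩
  simp only [Nat.add_sub_cancel]
  congr 1
  · push_cast
    ring
  · refine tsum_congr fun k => ?_
    have h1 : m + 1 + k = m + k + 1 := by omega
    rw [h1]
    congr 1
    push_cast
    ring
end

section
/- Under condition (basic), with Z the a.s. limit of the quasi-martingale Z_n and L_n = Z_n − ∑_{k=0}^{n−1}(E[Z_{k+1} | G_k] − Z_k) the associated martingale with a.s. limit L, one has E|√n (Z_n − Z) − √n (L_n − L)| ≤ √n ∑_{k≥n} E|Z_k − E[Z_{k+1} | G_k]| → 0 as n → ∞. -/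
set_option maxHeartbeats 1000000

open MeasureTheory Filter Real
open scoped ENNReal NNReal Topology

lemma telesc_aux (x : ℝ) (hx : 1 ≤ x) :
    (x+1) ^ (-(3/2) : ℝ) ≤ 2 * (x ^ (-(1/2) : ℝ) - (x+1) ^ (-(1/2) : ℝ)) := by
  have hx0 : 0 < x := by linarith
  have hx1 : 0 < x + 1 := by linarith
  set u := x ^ ((1/2):ℝ) with hu
  set v := (x+1) ^ ((1/2):ℝ) with hv
  have hu0 : 0 < u := rpow_pos_of_pos hx0 _
  have hv0 : 0 < v := rpow_pos_of_pos hx1 _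
  have huu : u * u = x := by rw [hu, ← rpow_add hx0]; norm_num
  have hvv : v * v = x + 1 := by rw [hv, ← rpow_add hx1]; norm_num
  have huv : u ≤ v := rpow_le_rpow hx0.le (by linarith) (by norm_num)
  have hA : x ^ (-(1/2) : ℝ) = u⁻¹ := by rw [hu, rpow_neg hx0.le]
  have hB : (x+1) ^ (-(1/2) : ℝ) = v⁻¹ := by rw [hv, rpow_neg hx1.le]
  have hC : (x+1) ^ (-(3/2) : ℝ) = v⁻¹ * (x+1)⁻¹ := by
    rw [show (-(3/2) : ℝ) = -(1/2) + (-1) by norm_num, rpow_add hx1, rpow_neg_one, hB]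
  rw [hA, hB, hC]
  rw [inv_eq_one_div, inv_eq_one_div, inv_eq_one_div, div_mul_div_comm, one_mul]
  have h1 : 1 ≤ u := by
    have := rpow_le_rpow (by norm_num : (0:ℝ) ≤ 1) hx (by norm_num : (0:ℝ) ≤ 1/2)
    rwa [one_rpow] at this
  have h2 : 1/u - 1/v = (v-u)/(u*v) := by field_simp
  rw [h2, mul_div_assoc']
  rw [div_le_div_iff₀ (by positivity) (by positivity)]
  have h3 : u*(v*v) ≤ v*(v*v) := by nlinarith
  have h4 : (u*u)*v ≤ v*(v*v) := by nlinarith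
  have h5 : (0:ℝ) < v + u := by linarith
  have hdiff : (v-u)*(v+u) = 1 := by nlinarith
  nlinarith [h3, h4, h5, hdiff, mul_pos (mul_pos hv0 hv0) hv0, mul_pos hu0 hv0]

lemma tail_summable_aux (n : ℕ) : Summable (fun k : ℕ => ((n+k : ℕ):ℝ) ^ (-(3/2):ℝ)) := by
  have h : Summable (fun k : ℕ => (k:ℝ) ^ (-(3/2):ℝ)) :=
    Real.summable_nat_rpow.2 (by norm_num)
  exact ((summable_nat_add_iff n).2 h).congr (fun k => by rw [Nat.add_comm])

lemma tail_bound_aux (n : ℕ) (hn : 1 ≤ n) :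
    ∑' k : ℕ, ((n+k : ℕ):ℝ) ^ (-(3/2):ℝ) ≤ 3 * (n:ℝ) ^ (-(1/2):ℝ) := by
  have hs := tail_summable_aux n
  set b : ℕ → ℝ := fun k => ((n+k : ℕ):ℝ) ^ (-(1/2):ℝ) with hbdef
  have hcast : ∀ k : ℕ, (1:ℝ) ≤ ((n+k : ℕ):ℝ) := by
    intro k
    have : 1 ≤ n + k := by omega
    exact_mod_cast this
  have hb0 : Tendsto b atTop (𝓝 0) := by
    have h1 : Tendsto (fun k : ℕ => ((n+k : ℕ):ℝ)) atTop atTop := by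
      apply tendsto_natCast_atTop_atTop.comp
      exact tendsto_atTop_mono (fun k => Nat.le_add_left k n) tendsto_id
    exact (tendsto_rpow_neg_atTop (by norm_num : (0:ℝ) < 1/2)).comp h1
  have hbmono : ∀ k, b (k+1) ≤ b k := by
    intro k
    apply Real.rpow_le_rpow_of_nonpos (by positivity) _ (by norm_num)
    push_cast; linarith
  have hterm : ∀ k, 0 ≤ b k - b (k+1) := fun k => by linarith [hbmono k]
  have hsum : HasSum (fun k => b k - b (k+1)) (b 0) := by
    rw [hasSum_iff_tendsto_nat_of_nonneg hterm]
    have : ∀ m, ∑ i ∈ Finset.range m, (b i - b (i+1)) = b 0 - b m :=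
      fun m => Finset.sum_range_sub' b m
    simp_rw [this]
    simpa using tendsto_const_nhds.sub hb0
  rw [Summable.tsum_eq_zero_add hs]
  have hle : ∑' k : ℕ, ((n+(k+1) : ℕ):ℝ) ^ (-(3/2):ℝ) ≤ ∑' k, 2 * (b k - b (k+1)) := by
    have hs1 : Summable (fun k : ℕ => ((n+(k+1) : ℕ):ℝ) ^ (-(3/2):ℝ)) :=
      (summable_nat_add_iff (f := fun k : ℕ => ((n+k : ℕ):ℝ) ^ (-(3/2):ℝ)) 1).2 hs
    apply Summable.tsum_le_tsum _ hs1 (hsum.mul_left 2).summable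
    intro k
    have h := telesc_aux ((n+k : ℕ):ℝ) (hcast k)
    have e1 : ((n+(k+1) : ℕ):ℝ) = ((n+k : ℕ):ℝ) + 1 := by push_cast; ring
    simp only [hbdef]
    rw [e1]
    exact h
  have hsumval : ∑' k, 2 * (b k - b (k+1)) = 2 * b 0 := (hsum.mul_left 2).tsum_eq
  have hb0val : b 0 = (n:ℝ) ^ (-(1/2):ℝ) := by simp [hbdef]
  have h0 : ((n+0 : ℕ):ℝ) ^ (-(3/2):ℝ) ≤ (n:ℝ) ^ (-(1/2):ℝ) := by
    simp only [Nat.add_zero]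
    exact Real.rpow_le_rpow_of_exponent_le (by exact_mod_cast hn) (by norm_num)
  have := hle.trans_eq hsumval
  rw [hb0val] at this
  linarith

theorem stmt5
    {Ω : Type*} {m0 : MeasurableSpace Ω} {μ : Measure Ω} [IsProbabilityMeasure μ]
    (𝒢 : ℕ → MeasurableSpace Ω) (h𝒢mono : Monotone 𝒢) (h𝒢le : ∀ n, 𝒢 n ≤ m0)
    (X : ℕ → Ω → ℝ) (hadp : ∀ n, 1 ≤ n → Measurable[𝒢 n] (X n))
    (hL2 : ∀ n, MemLp (X n) 2 μ)
    (K : ℝ) (hK : ∀ n, ∫ ω, (X n ω) ^ 2 ∂μ ≤ K)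
    (Z : ℕ → Ω → ℝ) (hZ : ∀ n, Z n = μ[X (n + 1)|𝒢 n])
    (hbasic : Tendsto
      (fun n : ℕ => (n : ℝ) ^ 3 * ∫ ω, ((μ[Z (n + 1)|𝒢 n]) ω - Z n ω) ^ 2 ∂μ)
      atTop (𝓝 0))
    (hrate : Tendsto
      (fun k : ℕ => (k : ℝ) ^ ((3 : ℝ) / 2) * ∫ ω, |Z k ω - (μ[Z (k + 1)|𝒢 k]) ω| ∂μ)
      atTop (𝓝 0))
    (Zlim : Ω → ℝ)
    (hZlim : ∀ᵐ ω ∂μ, Tendsto (fun n => Z n ω) atTop (𝓝 (Zlim ω)))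
    (hZL1 : Tendsto (fun n => ∫ ω, |Z n ω - Zlim ω| ∂μ) atTop (𝓝 0))
    (L : ℕ → Ω → ℝ)
    (hL : ∀ n ω, L n ω =
      Z n ω - ∑ k ∈ Finset.range n, ((μ[Z (k + 1)|𝒢 k]) ω - Z k ω))
    (Llim : Ω → ℝ)
    (hLlim : ∀ᵐ ω ∂μ, Tendsto (fun n => L n ω) atTop (𝓝 (Llim ω)))
    (hLL1 : Tendsto (fun n => ∫ ω, |L n ω - Llim ω| ∂μ) atTop (𝓝 0)) :
    (∀ n : ℕ,
      ∫ ω, |Real.sqrt n * (Z n ω - Zlim ω) - Real.sqrt n * (L n ω - Llim ω)| ∂μ ≤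
        Real.sqrt n * ∑' k : ℕ, ∫ ω, |Z (n + k) ω - (μ[Z (n + k + 1)|𝒢 (n + k)]) ω| ∂μ) ∧
    Tendsto
      (fun n : ℕ =>
        Real.sqrt n * ∑' k : ℕ, ∫ ω, |Z (n + k) ω - (μ[Z (n + k + 1)|𝒢 (n + k)]) ω| ∂μ)
      atTop (𝓝 0) := by
  classical
  set d : ℕ → Ω → ℝ := fun k ω => (μ[Z (k+1)|𝒢 k]) ω - Z k ω with hd
  set a : ℕ → ℝ := fun k => ∫ ω, |Z k ω - (μ[Z (k + 1)|𝒢 k]) ω| ∂μ with ha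
  have intZ : ∀ k, Integrable (Z k) μ := fun k => by rw [hZ k]; exact integrable_condExp
  have intE : ∀ k, Integrable (μ[Z (k+1)|𝒢 k]) μ := fun k => integrable_condExp
  have intd : ∀ k, Integrable (d k) μ := fun k => (intE k).sub (intZ k)
  have ha_eq : ∀ k, a k = ∫ ω, |d k ω| ∂μ := by
    intro k
    rw [ha]
    exact integral_congr_ae (Eventually.of_forall fun ω => abs_sub_comm _ _)
  have ha_nonneg : ∀ k, 0 ≤ a k := fun k => integral_nonneg fun ω => abs_nonneg _
  have hrate' : Tendsto (fun k : ℕ => (k:ℝ) ^ ((3:ℝ)/2) * a k) atTop (𝓝 0) := hrate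
  -- summability of a
  have ha_sum : Summable a := by
    have hev : ∀ᶠ k : ℕ in atTop, (k:ℝ) ^ ((3:ℝ)/2) * a k ≤ 1 :=
      hrate'.eventually (eventually_le_nhds (by norm_num : (0:ℝ) < 1))
    obtain ⟨N, hN⟩ := hev.exists_forall_of_atTop
    have hbd : ∀ k, N + 1 ≤ k → a k ≤ (k:ℝ) ^ (-(3/2):ℝ) := by
      intro k hk
      have hk0 : (0:ℝ) < (k:ℝ) := by exact_mod_cast Nat.lt_of_lt_of_le (Nat.succ_pos N) hk
      have h1 : (k:ℝ) ^ ((3:ℝ)/2) * a k ≤ 1 := hN k (by omega)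
      have h2 : (0:ℝ) < (k:ℝ) ^ ((3:ℝ)/2) := rpow_pos_of_pos hk0 _
      have h3 : (k:ℝ) ^ (-(3/2):ℝ) * ((k:ℝ) ^ ((3:ℝ)/2) * a k) ≤ (k:ℝ) ^ (-(3/2):ℝ) * 1 :=
        mul_le_mul_of_nonneg_left h1 (rpow_nonneg hk0.le _)
      have h4 : (k:ℝ) ^ (-(3/2):ℝ) * (k:ℝ) ^ ((3:ℝ)/2) = 1 := by
        rw [← rpow_add hk0]; norm_num
      calc a k = (k:ℝ) ^ (-(3/2):ℝ) * (k:ℝ) ^ ((3:ℝ)/2) * a k := by rw [h4]; ring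
        _ ≤ (k:ℝ) ^ (-(3/2):ℝ) := by rw [mul_assoc]; simpa using h3
    have htail : Summable (fun k => a (k + (N+1))) := by
      apply Summable.of_nonneg_of_le (fun k => ha_nonneg _)
        (fun k => hbd (k + (N+1)) (by omega))
      exact ((summable_nat_add_iff (N+1)).2 (Real.summable_nat_rpow.2 (by norm_num)))
    exact (summable_nat_add_iff (N+1)).1 htail
  have ha_tail : ∀ n, Summable (fun k => a (n+k)) := by
    intro n
    exact ((summable_nat_add_iff n).2 ha_sum).congr (fun k => by rw [Nat.add_comm])
  -- partial sums
  set S : ℕ → Ω → ℝ := fun m ω => ∑ k ∈ Finset.range m, d k ω with hS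
  have hSL : ∀ m ω, S m ω = Z m ω - L m ω := by
    intro m ω
    rw [hL m ω]
    simp [hS, hd]
  have intS : ∀ m, Integrable (S m) μ := fun m =>
    integrable_finset_sum _ (fun k _ => intd k)
  set W : Ω → ℝ := fun ω => Zlim ω - Llim ω with hW
  have hWlim : ∀ᵐ ω ∂μ, Tendsto (fun m => S m ω) atTop (𝓝 (W ω)) := by
    filter_upwards [hZlim, hLlim] with ω h1 h2
    exact (h1.sub h2).congr (fun m => (hSL m ω).symm)
  -- key estimate
  have key : ∀ n, ∫ ω, |S n ω - W ω| ∂μ ≤ ∑' k, a (n+k) := by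
    intro n
    have measW : AEStronglyMeasurable W μ :=
      aestronglyMeasurable_of_tendsto_ae atTop (fun m => (intS m).aestronglyMeasurable) hWlim
    have measF : AEStronglyMeasurable (fun ω => S n ω - W ω) μ :=
      (intS n).aestronglyMeasurable.sub measW
    have hbound : ∀ m, n ≤ m →
        ∫⁻ ω, ‖S n ω - S m ω‖₊ ∂μ ≤ ENNReal.ofReal (∑' k, a (n+k)) := by
      intro m hm
      have intdiff : Integrable (fun ω => S n ω - S m ω) μ := (intS n).sub (intS m)
      have hreal : ∫ ω, |S n ω - S m ω| ∂μ ≤ ∑' k, a (n+k) := by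
        have hpt : ∀ ω, |S n ω - S m ω| ≤ ∑ k ∈ Finset.Ico n m, |d k ω| := by
          intro ω
          have : S m ω - S n ω = ∑ k ∈ Finset.Ico n m, d k ω := by
            simp only [hS]
            exact (Finset.sum_Ico_eq_sub (fun k => d k ω) hm).symm
          rw [abs_sub_comm, this]
          exact Finset.abs_sum_le_sum_abs _ _
        have h1 : ∫ ω, |S n ω - S m ω| ∂μ ≤ ∫ ω, ∑ k ∈ Finset.Ico n m, |d k ω| ∂μ := by
          apply integral_mono intdiff.abs _ hpt
          exact integrable_finset_sum _ (fun k _ => (intd k).abs)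
        have h2 : ∫ ω, ∑ k ∈ Finset.Ico n m, |d k ω| ∂μ
            = ∑ k ∈ Finset.Ico n m, a k := by
          rw [integral_finset_sum _ (fun k _ => (intd k).abs)]
          exact Finset.sum_congr rfl (fun k _ => (ha_eq k).symm)
        have h3 : ∑ k ∈ Finset.Ico n m, a k ≤ ∑' k, a (n+k) := by
          rw [Finset.sum_Ico_eq_sum_range]
          exact Summable.sum_le_tsum _ (fun k _ => ha_nonneg _) (ha_tail n)
        linarith [h1, h2 ▸ h1, h3]
      calc ∫⁻ ω, ‖S n ω - S m ω‖₊ ∂μ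
          = ENNReal.ofReal (∫ ω, ‖S n ω - S m ω‖ ∂μ) :=
            (ofReal_integral_norm_eq_lintegral_enorm intdiff).symm
        _ ≤ ENNReal.ofReal (∑' k, a (n+k)) := by
            apply ENNReal.ofReal_le_ofReal
            simpa [Real.norm_eq_abs] using hreal
    have hae : ∀ᵐ ω ∂μ, (‖S n ω - W ω‖₊ : ℝ≥0∞)
        ≤ liminf (fun m => (‖S n ω - S m ω‖₊ : ℝ≥0∞)) atTop := by
      filter_upwards [hWlim] with ω hω
      have h1 : Tendsto (fun m => S n ω - S m ω) atTop (𝓝 (S n ω - W ω)) :=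
        tendsto_const_nhds.sub hω
      have h2 : Tendsto (fun m => (‖S n ω - S m ω‖₊ : ℝ≥0∞)) atTop
          (𝓝 (‖S n ω - W ω‖₊ : ℝ≥0∞)) :=
        (ENNReal.continuous_coe.comp continuous_nnnorm).continuousAt.tendsto.comp h1
      exact h2.liminf_eq.ge
    have hlin : ∫⁻ ω, ‖S n ω - W ω‖₊ ∂μ ≤ ENNReal.ofReal (∑' k, a (n+k)) := by
      calc ∫⁻ ω, ‖S n ω - W ω‖₊ ∂μ
          ≤ ∫⁻ ω, liminf (fun m => (‖S n ω - S m ω‖₊ : ℝ≥0∞)) atTop ∂μ :=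
            lintegral_mono_ae hae
        _ ≤ liminf (fun m => ∫⁻ ω, ‖S n ω - S m ω‖₊ ∂μ) atTop :=
            lintegral_liminf_le' (fun m => ((intS n).sub (intS m)).aestronglyMeasurable.enorm)
        _ ≤ ENNReal.ofReal (∑' k, a (n+k)) := by
            apply liminf_le_of_frequently_le'
            exact ((eventually_ge_atTop n).mono hbound).frequently
    have intF : Integrable (fun ω => S n ω - W ω) μ :=
      ⟨measF, hlin.trans_lt ENNReal.ofReal_lt_top⟩
    have : ENNReal.ofReal (∫ ω, ‖S n ω - W ω‖ ∂μ) ≤ ENNReal.ofReal (∑' k, a (n+k)) := by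
      rw [ofReal_integral_norm_eq_lintegral_enorm intF]
      exact hlin
    have h5 := (ENNReal.ofReal_le_ofReal_iff (tsum_nonneg (fun k => ha_nonneg _))).1 this
    simpa [Real.norm_eq_abs] using h5
  constructor
  · intro n
    have e : ∀ ω, |Real.sqrt n * (Z n ω - Zlim ω) - Real.sqrt n * (L n ω - Llim ω)|
        = Real.sqrt n * |S n ω - W ω| := by
      intro ω
      rw [← mul_sub, abs_mul, abs_of_nonneg (Real.sqrt_nonneg _)]
      congr 2
      rw [hSL n ω, hW]
      ring
    calc ∫ ω, |Real.sqrt n * (Z n ω - Zlim ω) - Real.sqrt n * (L n ω - Llim ω)| ∂μ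
        = ∫ ω, Real.sqrt n * |S n ω - W ω| ∂μ :=
          integral_congr_ae (Eventually.of_forall e)
      _ = Real.sqrt n * ∫ ω, |S n ω - W ω| ∂μ := integral_const_mul _ _
      _ ≤ Real.sqrt n * ∑' k, a (n+k) :=
          mul_le_mul_of_nonneg_left (key n) (Real.sqrt_nonneg _)
  · rw [Metric.tendsto_atTop]
    intro ε hε
    have hev : ∀ᶠ k : ℕ in atTop, (k:ℝ) ^ ((3:ℝ)/2) * a k ≤ ε/6 :=
      hrate'.eventually (eventually_le_nhds (by positivity))
    obtain ⟨N, hN⟩ := hev.exists_forall_of_atTop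
    refine ⟨N + 1, fun n hn => ?_⟩
    have hn1 : 1 ≤ n := by omega
    have hn0 : (0:ℝ) < n := by exact_mod_cast hn1
    have hbd : ∀ k : ℕ, a (n+k) ≤ ε/6 * ((n+k : ℕ):ℝ) ^ (-(3/2):ℝ) := by
      intro k
      have hj0 : (0:ℝ) < ((n+k : ℕ):ℝ) := by
        have : 1 ≤ n + k := by omega
        exact_mod_cast this
      have h1 : ((n+k : ℕ):ℝ) ^ ((3:ℝ)/2) * a (n+k) ≤ ε/6 := hN (n+k) (by omega)
      have h4 : ((n+k : ℕ):ℝ) ^ (-(3/2):ℝ) * ((n+k : ℕ):ℝ) ^ ((3:ℝ)/2) = 1 := by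
        rw [← rpow_add hj0]; norm_num
      calc a (n+k) = ((n+k : ℕ):ℝ) ^ (-(3/2):ℝ) * (((n+k : ℕ):ℝ) ^ ((3:ℝ)/2) * a (n+k)) := by
            rw [← mul_assoc, h4, one_mul]
        _ ≤ ((n+k : ℕ):ℝ) ^ (-(3/2):ℝ) * (ε/6) :=
            mul_le_mul_of_nonneg_left h1 (rpow_nonneg hj0.le _)
        _ = ε/6 * ((n+k : ℕ):ℝ) ^ (-(3/2):ℝ) := by ring
    have hT : ∑' k, a (n+k) ≤ ε/6 * (3 * (n:ℝ) ^ (-(1/2):ℝ)) := by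
      calc ∑' k, a (n+k) ≤ ∑' k : ℕ, ε/6 * ((n+k : ℕ):ℝ) ^ (-(3/2):ℝ) :=
            Summable.tsum_le_tsum hbd (ha_tail n) ((tail_summable_aux n).mul_left _)
        _ = ε/6 * ∑' k : ℕ, ((n+k : ℕ):ℝ) ^ (-(3/2):ℝ) := tsum_mul_left
        _ ≤ ε/6 * (3 * (n:ℝ) ^ (-(1/2):ℝ)) :=
            mul_le_mul_of_nonneg_left (tail_bound_aux n hn1) (by positivity)
    have hsqrt : Real.sqrt n * (n:ℝ) ^ (-(1/2):ℝ) = 1 := by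
      rw [Real.sqrt_eq_rpow, ← rpow_add hn0]
      norm_num
    have hfin : Real.sqrt n * ∑' k, a (n+k) ≤ ε/2 := by
      calc Real.sqrt n * ∑' k, a (n+k)
          ≤ Real.sqrt n * (ε/6 * (3 * (n:ℝ) ^ (-(1/2):ℝ))) :=
            mul_le_mul_of_nonneg_left hT (Real.sqrt_nonneg _)
        _ = ε/2 * (Real.sqrt n * (n:ℝ) ^ (-(1/2):ℝ)) := by ring
        _ = ε/2 := by rw [hsqrt, mul_one]
    have hpos : 0 ≤ Real.sqrt n * ∑' k, a (n+k) :=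
      mul_nonneg (Real.sqrt_nonneg _) (tsum_nonneg (fun k => ha_nonneg _))
    rw [Real.dist_eq, sub_zero, abs_of_nonneg hpos]
    linarith
end

section
/- With Y_{n,k} = (X_k − Z_{k−1} + k(E[Z_k | G_{k−1}] − Z_k))/√n and Q_n = n^{−1/2} ∑_{k=1}^n k(Z_{k−1} − E[Z_k | G_{k−1}]), one has the decomposition C_n = ∑_{k=1}^n Y_{n,k} + Q_n, and under condition (basic), E|Q_n| → 0 as n → ∞. -/
open MeasureTheory Filter Real
open scoped ENNReal NNReal Topology

lemma sqrtTop : Tendsto (fun n : ℕ => Real.sqrt n) atTop atTop := by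
  have h : Tendsto Real.sqrt atTop atTop := by
    have : Real.sqrt = fun x : ℝ => x ^ (1/2 : ℝ) := funext Real.sqrt_eq_rpow
    rw [this]; exact tendsto_rpow_atTop (by norm_num)
  exact h.comp tendsto_natCast_atTop_atTop

lemma sum_inv_sqrt_lower (n : ℕ) :
    Real.sqrt n - 1 ≤ ∑ i ∈ Finset.range n, (Real.sqrt i)⁻¹ := by
  induction n with
  | zero => simp
  | succ n ih =>
    rw [Finset.sum_range_succ]
    rcases Nat.eq_zero_or_pos n with h0 | hpos
    · subst h0; simp
    · have hs : 0 < Real.sqrt n := Real.sqrt_pos.2 (by positivity)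
      have hs2 : Real.sqrt n ^ 2 = (n : ℝ) := Real.sq_sqrt (by positivity)
      have ht2 : Real.sqrt ((n : ℕ) + 1 : ℕ) ^ 2 = (n : ℝ) + 1 := by
        rw [Real.sq_sqrt (by positivity)]; push_cast; ring
      have key : Real.sqrt ((n : ℕ) + 1 : ℕ) - Real.sqrt n ≤ (Real.sqrt n)⁻¹ := by
        rw [← one_div, le_div_iff₀ hs]
        nlinarith [sq_nonneg (Real.sqrt ((n : ℕ) + 1 : ℕ) - Real.sqrt n),
          Real.sqrt_nonneg ((n : ℕ) + 1 : ℕ)]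
      linarith

lemma sum_inv_sqrt_upper (n : ℕ) :
    ∑ i ∈ Finset.range (n + 1), (Real.sqrt i)⁻¹ ≤ 2 * Real.sqrt n := by
  induction n with
  | zero => simp
  | succ n ih =>
    rw [Finset.sum_range_succ]
    have ht : 0 < Real.sqrt ((n : ℕ) + 1 : ℕ) := Real.sqrt_pos.2 (by positivity)
    have hs2 : Real.sqrt n ^ 2 = (n : ℝ) := Real.sq_sqrt (by positivity)
    have ht2 : Real.sqrt ((n : ℕ) + 1 : ℕ) ^ 2 = (n : ℝ) + 1 := by
      rw [Real.sq_sqrt (by positivity)]; push_cast; ring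
    have key : (Real.sqrt ((n : ℕ) + 1 : ℕ))⁻¹ ≤
        2 * (Real.sqrt ((n : ℕ) + 1 : ℕ) - Real.sqrt n) := by
      rw [← one_div, div_le_iff₀ ht]
      nlinarith [sq_nonneg (Real.sqrt ((n : ℕ) + 1 : ℕ) - Real.sqrt n),
        Real.sqrt_nonneg n]
    linarith

lemma tendsto_weighted {f : ℕ → ℝ} (hf00 : f 0 = 0)
    (h2 : Tendsto (fun k : ℕ => Real.sqrt k * f k) atTop (𝓝 0)) :
    Tendsto (fun n : ℕ => (∑ k ∈ Finset.Icc 1 n, f k) / Real.sqrt n) atTop (𝓝 0) := by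
  have hfo : f =o[atTop] fun k : ℕ => (Real.sqrt k)⁻¹ := by
    rw [Asymptotics.isLittleO_iff_tendsto' ?side]
    case side =>
      filter_upwards [eventually_ge_atTop 1] with k hk h0
      exact absurd h0 (by positivity)
    refine h2.congr fun k => ?_
    simp [div_eq_mul_inv, mul_comm]
  have hg0 : ∀ i : ℕ, 0 ≤ (Real.sqrt i)⁻¹ := fun i => by positivity
  have hgtop : Tendsto (fun n : ℕ => ∑ i ∈ Finset.range n, (Real.sqrt i)⁻¹) atTop atTop := by
    refine tendsto_atTop_mono sum_inv_sqrt_lower ?_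
    simpa [sub_eq_add_neg] using tendsto_atTop_add_const_right atTop (-1 : ℝ) sqrtTop
  have hsum := hfo.sum_range hg0 hgtop
  have hgO : (fun n : ℕ => ∑ i ∈ Finset.range n, (Real.sqrt i)⁻¹) =O[atTop]
      fun n : ℕ => Real.sqrt n := by
    refine Asymptotics.IsBigO.of_bound 2 (Eventually.of_forall fun n => ?_)
    have h1 : ∑ i ∈ Finset.range n, (Real.sqrt i)⁻¹
        ≤ ∑ i ∈ Finset.range (n + 1), (Real.sqrt i)⁻¹ :=
      Finset.sum_le_sum_of_subset_of_nonneg (Finset.range_subset_range.2 (Nat.le_succ n))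
        (fun i _ _ => hg0 i)
    rw [Real.norm_of_nonneg (Finset.sum_nonneg fun i _ => hg0 i),
      Real.norm_of_nonneg (Real.sqrt_nonneg _)]
    exact h1.trans (sum_inv_sqrt_upper n)
  have htd := (hsum.trans_isBigO hgO).tendsto_div_nhds_zero
  have htd1 := htd.comp (tendsto_add_atTop_nat 1)
  have hratio : Tendsto (fun n : ℕ => Real.sqrt ((n : ℕ) + 1 : ℕ) / Real.sqrt n) atTop (𝓝 1) := by
    have hmain : Tendsto (fun n : ℕ => Real.sqrt (1 + ((n : ℝ))⁻¹)) atTop (𝓝 1) := by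
      have := ((tendsto_const_nhds (x := (1:ℝ)) (f := atTop)).add
        tendsto_inv_atTop_nhds_zero_nat).sqrt
      simpa using this
    refine hmain.congr' ?_
    filter_upwards [eventually_ge_atTop 1] with n hn
    have hn0 : (0:ℝ) < (n:ℝ) := by positivity
    rw [show (1 : ℝ) + ((n : ℝ))⁻¹ = (((n:ℕ) + 1 : ℕ) : ℝ) / (n : ℝ) by push_cast; field_simp,
      Real.sqrt_div (by positivity)]
  have hmul := htd1.mul hratio
  rw [zero_mul] at hmul
  refine Tendsto.congr' ?_ hmul
  filter_upwards [eventually_ge_atTop 1] with n hn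
  have hsn : (0:ℝ) < Real.sqrt n := Real.sqrt_pos.2 (by positivity)
  have hsn1 : (0:ℝ) < Real.sqrt ((n:ℕ) + 1 : ℕ) := Real.sqrt_pos.2 (by positivity)
  have hscc : ∑ i ∈ Finset.range (n + 1), f i = ∑ k ∈ Finset.Icc 1 n, f k := by
    have : Finset.range (n + 1) = insert 0 (Finset.Icc 1 n) := by
      ext x; simp [Finset.mem_range, Finset.mem_Icc]; omega
    rw [this, Finset.sum_insert (by simp), hf00, zero_add]
  show (∑ i ∈ Finset.range (n + 1), f i) / Real.sqrt ((n:ℕ) + 1 : ℕ)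
      * (Real.sqrt ((n:ℕ) + 1 : ℕ) / Real.sqrt n)
      = (∑ k ∈ Finset.Icc 1 n, f k) / Real.sqrt n
  rw [hscc]; field_simp

lemma memℒp_two_condexp {α : Type*} {m m0 : MeasurableSpace α} {μ : Measure α}
    [IsFiniteMeasure μ] (hm : m ≤ m0) {f : α → ℝ} (hf : MemLp f 2 μ) :
    MemLp (μ[f|m]) 2 μ := by
  set g := (condExpL2 ℝ ℝ hm (hf.toLp f) : α →₂[μ] ℝ)
  have hgm : AEStronglyMeasurable[m] (g : α → ℝ) μ := aestronglyMeasurable_condExpL2 hm _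
  have hae : (g : α → ℝ) =ᵐ[μ] μ[f|m] := by
    refine ae_eq_condExp_of_forall_setIntegral_eq hm (hf.integrable one_le_two)
      (fun s _ hμs => integrableOn_condExpL2_of_measure_ne_top hm hμs.ne _)
      (fun s hs hμs => ?_) hgm
    rw [integral_condExpL2_eq hm (hf.toLp f) hs hμs.ne]
    exact setIntegral_congr_ae (hm s hs) ((hf.coeFn_toLp).mono fun x hx _ => hx)
  exact (Lp.memLp g).ae_eq hae

lemma integral_abs_le_sqrt {α : Type*} {m0 : MeasurableSpace α} {μ : Measure α}
    [IsProbabilityMeasure μ] {f : α → ℝ} (hf : MemLp f 2 μ) :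
    ∫ ω, |f ω| ∂μ ≤ Real.sqrt (∫ ω, (f ω) ^ 2 ∂μ) := by
  have hpq : (2 : ℝ).HolderConjugate 2 := Real.HolderConjugate.two_two
  have h := integral_mul_le_Lp_mul_Lq_of_nonneg hpq
    (f := fun ω => |f ω|) (g := fun _ => (1 : ℝ))
    (Eventually.of_forall fun ω => abs_nonneg _)
    (Eventually.of_forall fun _ => zero_le_one)
    (by rw [ENNReal.ofReal_ofNat]; exact hf.abs)
    (by rw [ENNReal.ofReal_ofNat]; exact memLp_const 1)
  simp only [mul_one, Real.rpow_two, one_pow] at h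
  have h1 : ∫ (_ : α), (1:ℝ) ∂μ = 1 := by simp
  rw [h1, one_rpow, mul_one] at h
  simpa [Real.sqrt_eq_rpow, sq_abs] using h

theorem stmt6
    {Ω : Type*} {m0 : MeasurableSpace Ω} {μ : Measure Ω} [IsProbabilityMeasure μ]
    (𝒢 : ℕ → MeasurableSpace Ω) (h𝒢mono : Monotone 𝒢) (h𝒢le : ∀ n, 𝒢 n ≤ m0)
    (X : ℕ → Ω → ℝ) (hadp : ∀ n, 1 ≤ n → Measurable[𝒢 n] (X n))
    (hL2 : ∀ n, MemLp (X n) 2 μ)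
    (Z : ℕ → Ω → ℝ) (hZ : ∀ n, Z n = μ[X (n + 1)|𝒢 n])
    (hbasic : Tendsto
      (fun n : ℕ => (n : ℝ) ^ 3 * ∫ ω, ((μ[Z (n + 1)|𝒢 n]) ω - Z n ω) ^ 2 ∂μ)
      atTop (𝓝 0))
    (C : ℕ → Ω → ℝ)
    (hC : ∀ n ω, C n ω =
      Real.sqrt n * ((1 / (n : ℝ)) * ∑ k ∈ Finset.Icc 1 n, X k ω - Z n ω))
    (Yar : ℕ → ℕ → Ω → ℝ)
    (hYar : ∀ n k ω, Yar n k ω =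
      (X k ω - Z (k - 1) ω + k * ((μ[Z k|𝒢 (k - 1)]) ω - Z k ω)) / Real.sqrt n)
    (Q : ℕ → Ω → ℝ)
    (hQ : ∀ n ω, Q n ω =
      (1 / Real.sqrt n) *
        ∑ k ∈ Finset.Icc 1 n, (k : ℝ) * (Z (k - 1) ω - (μ[Z k|𝒢 (k - 1)]) ω)) :
    (∀ n, 1 ≤ n → ∀ ω, C n ω = ∑ k ∈ Finset.Icc 1 n, Yar n k ω + Q n ω) ∧
    Tendsto (fun n => ∫ ω, |Q n ω| ∂μ) atTop (𝓝 0) := by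
  constructor
  · -- Part 1: decomposition
    intro n hn ω
    have hn0 : (0:ℝ) < (n:ℝ) := by exact_mod_cast hn
    have hsn : (0:ℝ) < Real.sqrt n := Real.sqrt_pos.2 hn0
    have hs2 : Real.sqrt n * Real.sqrt n = (n:ℝ) := Real.mul_self_sqrt hn0.le
    have hterm : ∀ k ∈ Finset.Icc 1 n,
        Yar n k ω + (1 / Real.sqrt n) * ((k:ℝ) * (Z (k-1) ω - (μ[Z k|𝒢 (k-1)]) ω))
        = (X k ω + (((k-1:ℕ):ℝ) * Z (k-1) ω - (k:ℝ) * Z k ω)) / Real.sqrt n := by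
      intro k hk
      have h1 : ((k-1:ℕ):ℝ) = (k:ℝ) - 1 := by
        rw [Nat.cast_sub (Finset.mem_Icc.1 hk).1, Nat.cast_one]
      rw [hYar, h1]
      field_simp
      ring
    have hsum : ∑ k ∈ Finset.Icc 1 n, Yar n k ω + Q n ω
        = (∑ k ∈ Finset.Icc 1 n,
            (X k ω + (((k-1:ℕ):ℝ) * Z (k-1) ω - (k:ℝ) * Z k ω))) / Real.sqrt n := by
      rw [hQ, Finset.mul_sum, ← Finset.sum_add_distrib, Finset.sum_div]
      exact Finset.sum_congr rfl hterm
    have htel : ∑ k ∈ Finset.Icc 1 n, (((k-1:ℕ):ℝ) * Z (k-1) ω - (k:ℝ) * Z k ω)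
        = - ((n:ℝ) * Z n ω) := by
      rw [← Finset.Ico_add_one_right_eq_Icc, Finset.sum_Ico_eq_sum_range]
      have hc : ∀ i : ℕ, (((1+i)-1:ℕ):ℝ) * Z ((1+i)-1) ω - ((1+i:ℕ):ℝ) * Z (1+i) ω
          = (fun m : ℕ => (m:ℝ) * Z m ω) i - (fun m : ℕ => (m:ℝ) * Z m ω) (i+1) := by
        intro i
        have e1 : (1+i)-1 = i := by omega
        have e2 : 1+i = i+1 := by omega
        rw [e1, e2]
      rw [Finset.sum_congr rfl (fun i _ => hc i), Finset.sum_range_sub']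
      simp
    rw [hC, hsum, Finset.sum_add_distrib, htel]
    field_simp
    linear_combination ((∑ k ∈ Finset.Icc 1 n, X k ω) - (n:ℝ) * Z n ω) * hs2
  · -- Part 2: L¹ convergence of Q
    set a : ℕ → ℝ := fun m => ∫ ω, ((μ[Z (m+1)|𝒢 m]) ω - Z m ω) ^ 2 ∂μ with ha_def
    have ha : ∀ m, 0 ≤ a m := fun m => integral_nonneg fun ω => sq_nonneg _
    set F : ℕ → ℝ := fun k => (k:ℝ) * Real.sqrt (a (k-1)) with hF_def
    have hF0 : F 0 = 0 := by simp [hF_def]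
    -- Z and condexp are in L²
    have hZ2 : ∀ m, MemLp (Z m) 2 μ := fun m => by
      rw [hZ]; exact memℒp_two_condexp (h𝒢le m) (hL2 (m+1))
    have hW2 : ∀ k : ℕ, MemLp (μ[Z k|𝒢 (k-1)]) 2 μ := fun k =>
      memℒp_two_condexp (h𝒢le (k-1)) (hZ2 k)
    have hD2 : ∀ k : ℕ, MemLp (fun ω => Z (k-1) ω - (μ[Z k|𝒢 (k-1)]) ω) 2 μ := fun k =>
      (hZ2 (k-1)).sub (hW2 k)
    have hDint : ∀ k : ℕ, Integrable (fun ω => Z (k-1) ω - (μ[Z k|𝒢 (k-1)]) ω) μ := fun k =>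
      (hD2 k).integrable one_le_two
    have hDk : ∀ k : ℕ, 1 ≤ k →
        ∫ ω, |Z (k-1) ω - (μ[Z k|𝒢 (k-1)]) ω| ∂μ ≤ Real.sqrt (a (k-1)) := by
      intro k hk
      refine (integral_abs_le_sqrt (hD2 k)).trans (le_of_eq ?_)
      have hk1 : k - 1 + 1 = k := Nat.succ_pred_eq_of_pos hk
      have e : a (k-1) = ∫ ω, ((μ[Z k|𝒢 (k-1)]) ω - Z (k-1) ω) ^ 2 ∂μ := by
        simp only [ha_def, hk1]
      rw [e]
      congr 1
      exact integral_congr_ae (Eventually.of_forall fun ω => by ring)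
    -- the limit of the bounding sequence
    have h1 : Tendsto (fun k : ℕ => (k:ℝ)^3 * a (k-1)) atTop (𝓝 0) := by
      refine squeeze_zero' (g := fun k : ℕ => 8 * (((k-1:ℕ):ℝ)^3 * a (k-1)))
        (Eventually.of_forall fun k => mul_nonneg (by positivity) (ha _)) ?_ ?_
      · filter_upwards [eventually_ge_atTop 2] with k hk
        have hc : ((k-1:ℕ):ℝ) = (k:ℝ) - 1 := by
          rw [Nat.cast_sub (by omega), Nat.cast_one]
        have hk2 : (2:ℝ) ≤ (k:ℝ) := by exact_mod_cast hk
        have hcube : (k:ℝ)^3 ≤ 8 * ((k:ℝ)-1)^3 := by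
          have h2 : (0:ℝ) ≤ (k:ℝ) - 2 := by linarith
          nlinarith [mul_nonneg (mul_nonneg h2 h2) h2, sq_nonneg ((k:ℝ)-2), h2]
        calc (k:ℝ)^3 * a (k-1) ≤ (8 * ((k:ℝ)-1)^3) * a (k-1) :=
              mul_le_mul_of_nonneg_right hcube (ha _)
          _ = 8 * (((k-1:ℕ):ℝ)^3 * a (k-1)) := by rw [hc]; ring
      · have := (hbasic.comp (tendsto_sub_atTop_nat 1)).const_mul (8:ℝ)
        simpa using this
    have h2 : Tendsto (fun k : ℕ => Real.sqrt k * F k) atTop (𝓝 0) := by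
      have hx : ∀ k : ℕ, Real.sqrt k * F k = Real.sqrt ((k:ℝ)^3 * a (k-1)) := by
        intro k
        rw [hF_def]
        rw [show ((k:ℝ)^3 * a (k-1)) = ((k:ℝ))^2 * ((k:ℝ) * a (k-1)) by ring,
          Real.sqrt_mul (sq_nonneg _), Real.sqrt_sq (by positivity),
          Real.sqrt_mul (by positivity)]
        ring
      have := h1.sqrt
      rw [Real.sqrt_zero] at this
      exact (tendsto_congr hx).2 this
    have hw := tendsto_weighted hF0 h2
    -- the integral bound
    have hQb : ∀ n : ℕ, 1 ≤ n →
        ∫ ω, |Q n ω| ∂μ ≤ (∑ k ∈ Finset.Icc 1 n, F k) / Real.sqrt n := by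
      intro n hn
      have hn0 : (0:ℝ) < (n:ℝ) := by exact_mod_cast hn
      have hsn : (0:ℝ) < Real.sqrt n := Real.sqrt_pos.2 hn0
      have e1 : ∀ ω, |Q n ω|
          = |∑ k ∈ Finset.Icc 1 n, (k:ℝ) * (Z (k-1) ω - (μ[Z k|𝒢 (k-1)]) ω)| / Real.sqrt n := by
        intro ω
        rw [hQ, abs_mul, abs_of_nonneg (by positivity : (0:ℝ) ≤ 1 / Real.sqrt n)]
        field_simp
      simp_rw [e1]
      rw [integral_div]
      gcongr
      calc ∫ ω, |∑ k ∈ Finset.Icc 1 n, (k:ℝ) * (Z (k-1) ω - (μ[Z k|𝒢 (k-1)]) ω)| ∂μ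
          ≤ ∫ ω, ∑ k ∈ Finset.Icc 1 n, |(k:ℝ) * (Z (k-1) ω - (μ[Z k|𝒢 (k-1)]) ω)| ∂μ := by
            refine integral_mono ?_ ?_ (fun ω => Finset.abs_sum_le_sum_abs _ _)
            · exact (integrable_finset_sum _ fun k _ => (hDint k).const_mul _).abs
            · exact integrable_finset_sum _ fun k _ => ((hDint k).const_mul _).abs
        _ = ∑ k ∈ Finset.Icc 1 n, ∫ ω, |(k:ℝ) * (Z (k-1) ω - (μ[Z k|𝒢 (k-1)]) ω)| ∂μ :=
            integral_finset_sum _ fun k _ => ((hDint k).const_mul _).abs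
        _ ≤ ∑ k ∈ Finset.Icc 1 n, F k := by
            refine Finset.sum_le_sum fun k hk => ?_
            have : ∀ ω, |(k:ℝ) * (Z (k-1) ω - (μ[Z k|𝒢 (k-1)]) ω)|
                = (k:ℝ) * |Z (k-1) ω - (μ[Z k|𝒢 (k-1)]) ω| := by
              intro ω; rw [abs_mul, Nat.abs_cast]
            simp_rw [this]
            rw [integral_const_mul]
            exact mul_le_mul_of_nonneg_left (hDk k (Finset.mem_Icc.1 hk).1)
              (Nat.cast_nonneg k)
    refine squeeze_zero'
      (Eventually.of_forall fun n => integral_nonneg fun ω => abs_nonneg _) ?_ hw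
    filter_upwards [eventually_ge_atTop 1] with n hn
    exact hQb n hn
end

section
/- In the randomly reinforced two-color urn with E[B_{n+1}] = E[R_{n+1}] and (B_{n+1}, R_{n+1}) independent of G_n ∨ σ(X_{n+1}), one has |E[Z_{n+1} | G_n] − Z_n| ≤ (E[B_{n+1}^2] + E[R_{n+1}^2]) / S_n^2 almost surely. -/
open MeasureTheory Filter Real ProbabilityTheory
open scoped ENNReal NNReal Topology


lemma fubini_indep {Ω : Type*} {m0 : MeasurableSpace Ω} {μ : Measure Ω} [IsProbabilityMeasure μ]
    {α β : Type*} [MeasurableSpace α] [MeasurableSpace β]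
    (P : Ω → α) (V : Ω → β) (hP : Measurable P) (hV : Measurable V)
    (hPV : ProbabilityTheory.IndepFun P V μ)
    (G : α → β → ℝ) (hG : Measurable (fun q : α × β => G q.1 q.2)) (hGb : ∀ p v, |G p v| ≤ 2) :
    ∫ ω, G (P ω) (V ω) ∂μ = ∫ ω, (∫ ω', G (P ω') (V ω) ∂μ) ∂μ := by
  have hmap : μ.map (fun ω => (P ω, V ω)) = (μ.map P).prod (μ.map V) :=
    (indepFun_iff_map_prod_eq_prod_map_map hP.aemeasurable hV.aemeasurable).mp hPV
  haveI : IsProbabilityMeasure (μ.map P) := Measure.isProbabilityMeasure_map hP.aemeasurable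
  haveI : IsProbabilityMeasure (μ.map V) := Measure.isProbabilityMeasure_map hV.aemeasurable
  have hGsm : StronglyMeasurable (fun q : α × β => G q.1 q.2) := hG.stronglyMeasurable
  have hint : Integrable (fun q : α × β => G q.1 q.2) ((μ.map P).prod (μ.map V)) := by
    refine Integrable.mono' (integrable_const 2) hGsm.aestronglyMeasurable ?_
    exact Eventually.of_forall fun q => by simpa using hGb q.1 q.2
  have h1 : ∫ ω, G (P ω) (V ω) ∂μ = ∫ q : α × β, G q.1 q.2 ∂(μ.map (fun ω => (P ω, V ω))) := by
    rw [integral_map (hP.prodMk hV).aemeasurable]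
    exact hGsm.aestronglyMeasurable
  rw [h1, hmap, integral_prod_symm _ hint]
  -- now : ∫ y, ∫ x, G x y ∂(μ.map P) ∂(μ.map V) = ∫ ω, ∫ ω', G (P ω') (V ω) ∂μ ∂μ
  have hinner : ∀ v : β, ∫ p, G p v ∂(μ.map P) = ∫ ω', G (P ω') v ∂μ := fun v => by
    rw [integral_map hP.aemeasurable]
    exact (hGsm.comp_measurable (measurable_id.prodMk measurable_const)).aestronglyMeasurable
  simp_rw [hinner]
  rw [integral_map hV.aemeasurable]
  have : StronglyMeasurable (fun v : β => ∫ ω', G (P ω') v ∂μ) := by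
    have : StronglyMeasurable (fun q : β × Ω => G (P q.2) q.1) :=
      hGsm.comp_measurable ((hP.comp measurable_snd).prodMk measurable_fst)
    exact this.integral_prod_right'
  exact this.aestronglyMeasurable


noncomputable def cl01 (x : ℝ) : ℝ := min (max x 0) 1
noncomputable def qf (c s u : ℝ) : ℝ := max u 0 / (max s c + max u 0)

lemma cl01_mem (x : ℝ) : 0 ≤ cl01 x ∧ cl01 x ≤ 1 := by
  unfold cl01; constructor
  · exact le_min (le_max_right _ _) zero_le_one
  · exact min_le_right _ _

lemma cl01_eq {x : ℝ} (h0 : 0 ≤ x) (h1 : x ≤ 1) : cl01 x = x := by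
  unfold cl01; rw [max_eq_left h0, min_eq_left h1]

lemma cl01_continuous : Continuous cl01 := by
  unfold cl01; fun_prop

lemma qf_denom_pos {c : ℝ} (hc : 0 < c) (s u : ℝ) : 0 < max s c + max u 0 := by
  have := le_max_right s c
  have := le_max_right u (0:ℝ)
  nlinarith

lemma qf_nonneg {c : ℝ} (hc : 0 < c) (s u : ℝ) : 0 ≤ qf c s u :=
  div_nonneg (le_max_right _ _) (qf_denom_pos hc s u).le

lemma qf_le_one {c : ℝ} (hc : 0 < c) (s u : ℝ) : qf c s u ≤ 1 := by
  unfold qf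
  rw [div_le_one (qf_denom_pos hc s u)]
  have := le_max_right s c
  nlinarith

lemma qf_eq {c : ℝ} (hc : 0 < c) {s u : ℝ} (hs : c ≤ s) (hu : 0 ≤ u) :
    qf c s u = u / (s + u) := by
  unfold qf; rw [max_eq_left hs, max_eq_left hu]

lemma qf_continuous {c : ℝ} (hc : 0 < c) :
    Continuous (fun p : ℝ × ℝ => qf c p.1 p.2) := by
  unfold qf
  apply Continuous.div
  · fun_prop
  · fun_prop
  · exact fun p => (qf_denom_pos hc p.1 p.2).ne'

lemma phi_diff_bound {Ω : Type*} {m0 : MeasurableSpace Ω} {μ : Measure Ω}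
    [IsProbabilityMeasure μ]
    (B R : Ω → ℝ) (hB0 : ∀ ω, 0 ≤ B ω) (hR0 : ∀ ω, 0 ≤ R ω)
    (hBm : Measurable B) (hRm : Measurable R)
    (hBL2 : MemLp B 2 μ) (hRL2 : MemLp R 2 μ)
    (hmean : ∫ ω, B ω ∂μ = ∫ ω, R ω ∂μ)
    {s : ℝ} (hs : 0 < s) :
    |(∫ ω, B ω / (s + B ω) ∂μ) - ∫ ω, R ω / (s + R ω) ∂μ| ≤
      (∫ ω, B ω ^ 2 ∂μ + ∫ ω, R ω ^ 2 ∂μ) / s ^ 2 := by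
  have key : ∀ (F : Ω → ℝ), (∀ ω, 0 ≤ F ω) → Measurable F → MemLp F 2 μ →
      ∃ e : ℝ, (∫ ω, F ω / (s + F ω) ∂μ) = (∫ ω, F ω ∂μ) / s - e ∧
        0 ≤ e ∧ e ≤ (∫ ω, F ω ^ 2 ∂μ) / s ^ 2 := by
    intro F hF0 hFm hFL2
    have hden : ∀ ω, 0 < s + F ω := fun ω => by have := hF0 ω; linarith
    have hpt : ∀ ω, F ω / (s + F ω) = F ω / s - F ω ^ 2 / (s * (s + F ω)) := by
      intro ω
      have h1 := (hden ω).ne'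
      field_simp
      ring
    have hFi : Integrable F μ := hFL2.integrable one_le_two
    have hF2i : Integrable (fun ω => F ω ^ 2) μ := hFL2.integrable_sq
    have herr_bd : ∀ ω, F ω ^ 2 / (s * (s + F ω)) ≤ F ω ^ 2 / s ^ 2 := by
      intro ω
      apply div_le_div_of_nonneg_left (sq_nonneg _) (by positivity)
      have := hF0 ω; nlinarith
    have herr_nn : ∀ ω, 0 ≤ F ω ^ 2 / (s * (s + F ω)) := fun ω =>
      div_nonneg (sq_nonneg _) (by have := hden ω; positivity)
    have herri : Integrable (fun ω => F ω ^ 2 / (s * (s + F ω))) μ := by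
      refine Integrable.mono' (hF2i.div_const (s ^ 2)) ?_ ?_
      · exact ((hFm.pow_const 2).div ((measurable_const.add hFm).const_mul s)).aestronglyMeasurable
      · refine Eventually.of_forall fun ω => ?_
        rw [Real.norm_eq_abs, abs_of_nonneg (herr_nn ω)]
        exact herr_bd ω
    refine ⟨∫ ω, F ω ^ 2 / (s * (s + F ω)) ∂μ, ?_, integral_nonneg herr_nn, ?_⟩
    · rw [← integral_div, ← integral_sub (hFi.div_const s) herri]
      exact integral_congr_ae (Eventually.of_forall hpt)
    · rw [← integral_div]
      exact integral_mono herri (hF2i.div_const _) herr_bd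
  obtain ⟨eB, hB, hB0', hB1⟩ := key B hB0 hBm hBL2
  obtain ⟨eR, hR, hR0', hR1⟩ := key R hR0 hRm hRL2
  rw [hB, hR, hmean]
  have h2B : (0:ℝ) ≤ (∫ ω, B ω ^ 2 ∂μ) / s ^ 2 := le_trans hB0' hB1
  have h2R : (0:ℝ) ≤ (∫ ω, R ω ^ 2 ∂μ) / s ^ 2 := le_trans hR0' hR1
  rw [abs_le]
  constructor
  · rw [add_div]; nlinarith
  · rw [add_div]; nlinarith

noncomputable def Gfun (c : ℝ) (p : ℝ × ℝ) (w : ℝ × ℝ × ℝ × ℝ) : ℝ :=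
  cl01 w.1 * (cl01 w.2.2.2 * (1 - cl01 w.2.2.1) * qf c w.2.1 p.1
    - (1 - cl01 w.2.2.2) * cl01 w.2.2.1 * qf c w.2.1 p.2)

lemma Gfun_continuous {c : ℝ} (hc : 0 < c) :
    Continuous (fun q : (ℝ × ℝ) × (ℝ × ℝ × ℝ × ℝ) => Gfun c q.1 q.2) := by
  unfold Gfun
  have hq : ∀ (f g : ((ℝ × ℝ) × (ℝ × ℝ × ℝ × ℝ)) → ℝ), Continuous f → Continuous g →
      Continuous (fun q => qf c (f q) (g q)) := fun f g hf hg =>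
    (qf_continuous hc).comp (hf.prodMk hg)
  have hcl : ∀ (f : ((ℝ × ℝ) × (ℝ × ℝ × ℝ × ℝ)) → ℝ), Continuous f →
      Continuous (fun q => cl01 (f q)) := fun f hf => cl01_continuous.comp hf
  refine Continuous.mul (hcl _ (by fun_prop)) (Continuous.sub ?_ ?_)
  · exact ((hcl _ (by fun_prop)).mul ((continuous_const.sub (hcl _ (by fun_prop))))).mul
      (hq _ _ (by fun_prop) (by fun_prop))
  · exact (((continuous_const.sub (hcl _ (by fun_prop)))).mul (hcl _ (by fun_prop))).mul
      (hq _ _ (by fun_prop) (by fun_prop))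

lemma Gfun_abs_le {c : ℝ} (hc : 0 < c) (p : ℝ × ℝ) (w : ℝ × ℝ × ℝ × ℝ) :
    |Gfun c p w| ≤ 2 := by
  unfold Gfun
  have h1 := cl01_mem w.1
  have h2 := cl01_mem w.2.2.2
  have h3 := cl01_mem w.2.2.1
  have h4 : 0 ≤ qf c w.2.1 p.1 := qf_nonneg hc _ _
  have h5 : qf c w.2.1 p.1 ≤ 1 := qf_le_one hc _ _
  have h6 : 0 ≤ qf c w.2.1 p.2 := qf_nonneg hc _ _
  have h7 : qf c w.2.1 p.2 ≤ 1 := qf_le_one hc _ _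
  rw [abs_mul]
  have t1 : |cl01 w.1| ≤ 1 := by rw [abs_of_nonneg h1.1]; exact h1.2
  have t2 : |cl01 w.2.2.2 * (1 - cl01 w.2.2.1) * qf c w.2.1 p.1
      - (1 - cl01 w.2.2.2) * cl01 w.2.2.1 * qf c w.2.1 p.2| ≤ 2 := by
    have e1 : 0 ≤ cl01 w.2.2.2 * (1 - cl01 w.2.2.1) * qf c w.2.1 p.1 := by
      have h : 0 ≤ 1 - cl01 w.2.2.1 := by linarith [h3.2]
      exact mul_nonneg (mul_nonneg h2.1 h) h4
    have e2 : cl01 w.2.2.2 * (1 - cl01 w.2.2.1) * qf c w.2.1 p.1 ≤ 1 := by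
      nlinarith [h2.1, h2.2, h3.1, h3.2, mul_nonneg h2.1 h3.1]
    have e3 : 0 ≤ (1 - cl01 w.2.2.2) * cl01 w.2.2.1 * qf c w.2.1 p.2 := by
      have h : 0 ≤ 1 - cl01 w.2.2.2 := by linarith [h2.2]
      exact mul_nonneg (mul_nonneg h h3.1) h6
    have e4 : (1 - cl01 w.2.2.2) * cl01 w.2.2.1 * qf c w.2.1 p.2 ≤ 1 := by
      nlinarith [h2.1, h2.2, h3.1, h3.2, mul_nonneg h2.1 h3.1]
    rw [abs_sub_le_iff]
    constructor <;> linarith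
  calc |cl01 w.1| * |_| ≤ 1 * 2 := mul_le_mul t1 t2 (abs_nonneg _) one_pos.le
    _ = 2 := by norm_num

lemma phi_meas {Ω : Type*} [MeasurableSpace Ω] (μ : Measure Ω) [SFinite μ] {c : ℝ} (hc : 0 < c)
    (B : Ω → ℝ) (hBm : Measurable B) :
    Measurable (fun s : ℝ => ∫ ω', qf c s (B ω') ∂μ) := by
  have h : Measurable (fun q : ℝ × Ω => qf c q.1 (B q.2)) :=
    (qf_continuous hc).measurable.comp (measurable_fst.prodMk (hBm.comp measurable_snd))
  exact h.stronglyMeasurable.integral_prod_right'.measurable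

lemma my_setIntegral_congr_ae {α : Type*} {mα : MeasurableSpace α} {μ : Measure α} {s : Set α}
    {f g : α → ℝ} (hs : MeasurableSet s) (h : ∀ᵐ x ∂μ, x ∈ s → f x = g x) :
    ∫ x in s, f x ∂μ = ∫ x in s, g x ∂μ := setIntegral_congr_ae hs h

lemma my_integral_indicator {α : Type*} {mα : MeasurableSpace α} {μ : Measure α} {s : Set α}
    {f : α → ℝ} (hs : MeasurableSet s) :
    ∫ x in s, f x ∂μ = ∫ x, s.indicator f x ∂μ := (integral_indicator hs).symm

lemma key_step {Ω : Type*} {m0 : MeasurableSpace Ω} {μ : Measure Ω} [IsProbabilityMeasure μ]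
    {m : MeasurableSpace Ω} (hm : m ≤ m0) {c : ℝ} (hc : 0 < c)
    (X B R S Z Z' : Ω → ℝ)
    (hX01 : ∀ ω, X ω = 0 ∨ X ω = 1)
    (hB0 : ∀ ω, 0 ≤ B ω) (hR0 : ∀ ω, 0 ≤ R ω)
    (hSm : Measurable[m] S) (hZm : Measurable[m] Z)
    (hXm : Measurable[m0] X) (hBm : Measurable[m0] B) (hRm : Measurable[m0] R)
    (hSc : ∀ ω, c ≤ S ω) (hZ0 : ∀ ω, 0 ≤ Z ω) (hZ1 : ∀ ω, Z ω ≤ 1)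
    (hBL2 : MemLp B 2 μ) (hRL2 : MemLp R 2 μ)
    (hindep : Indep (MeasurableSpace.comap (fun ω => (B ω, R ω)) inferInstance)
      (m ⊔ MeasurableSpace.comap X inferInstance) μ)
    (hmean : ∫ ω, B ω ∂μ = ∫ ω, R ω ∂μ)
    (hZX : Z =ᵐ[μ] μ[X|m])
    (hZ'eq : ∀ ω, Z' ω = (Z ω * S ω + B ω * X ω) / (S ω + B ω * X ω + R ω * (1 - X ω))) :
    ∀ᵐ ω ∂μ, |(μ[Z'|m]) ω - Z ω| ≤
      (∫ ω', B ω' ^ 2 ∂μ + ∫ ω', R ω' ^ 2 ∂μ) / (S ω) ^ 2 := by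
  have hX0 : ∀ ω, 0 ≤ X ω := fun ω => by rcases hX01 ω with h | h <;> simp [h]
  have hX1 : ∀ ω, X ω ≤ 1 := fun ω => by rcases hX01 ω with h | h <;> simp [h]
  have hS0 : ∀ ω, 0 < S ω := fun ω => lt_of_lt_of_le hc (hSc ω)
  have hSm0 : Measurable[m0] S := hSm.mono hm le_rfl
  have hZm0 : Measurable[m0] Z := hZm.mono hm le_rfl
  -- φ functions
  set φB : ℝ → ℝ := fun s => ∫ ω', qf c s (B ω') ∂μ with hφB
  set φR : ℝ → ℝ := fun s => ∫ ω', qf c s (R ω') ∂μ with hφR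
  have hqmB : ∀ s : ℝ, Measurable[m0] (fun ω' => qf c s (B ω')) := fun s =>
    (qf_continuous hc).measurable.comp (measurable_const.prodMk hBm)
  have hqmR : ∀ s : ℝ, Measurable[m0] (fun ω' => qf c s (R ω')) := fun s =>
    (qf_continuous hc).measurable.comp (measurable_const.prodMk hRm)
  have hqiB : ∀ s : ℝ, Integrable (fun ω' => qf c s (B ω')) μ := fun s => by
    refine Integrable.mono' (integrable_const 1) (hqmB s).aestronglyMeasurable ?_
    exact Eventually.of_forall fun ω' => by
      rw [Real.norm_eq_abs, abs_of_nonneg (qf_nonneg hc _ _)]; exact qf_le_one hc _ _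
  have hqiR : ∀ s : ℝ, Integrable (fun ω' => qf c s (R ω')) μ := fun s => by
    refine Integrable.mono' (integrable_const 1) (hqmR s).aestronglyMeasurable ?_
    exact Eventually.of_forall fun ω' => by
      rw [Real.norm_eq_abs, abs_of_nonneg (qf_nonneg hc _ _)]; exact qf_le_one hc _ _
  have hφB01 : ∀ s, 0 ≤ φB s ∧ φB s ≤ 1 := fun s => by
    refine ⟨integral_nonneg fun ω' => qf_nonneg hc _ _, ?_⟩
    have h := integral_mono (hqiB s) (integrable_const (1:ℝ)) (fun ω' => qf_le_one hc _ _)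
    simpa using h
  have hφR01 : ∀ s, 0 ≤ φR s ∧ φR s ≤ 1 := fun s => by
    refine ⟨integral_nonneg fun ω' => qf_nonneg hc _ _, ?_⟩
    have h := integral_mono (hqiR s) (integrable_const (1:ℝ)) (fun ω' => qf_le_one hc _ _)
    simpa using h
  have hφBm : Measurable φB := @phi_meas Ω m0 μ inferInstance c hc B hBm
  have hφRm : Measurable φR := @phi_meas Ω m0 μ inferInstance c hc R hRm
  -- C and D
  set C : Ω → ℝ := fun ω => Z ω * (1 - Z ω) * (φB (S ω) - φR (S ω)) with hC
  set D : Ω → ℝ := fun ω => Z' ω - Z ω with hD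
  -- pointwise formula for D
  have hdenpos : ∀ ω, 0 < S ω + B ω * X ω + R ω * (1 - X ω) := by
    intro ω
    have := hS0 ω
    rcases hX01 ω with h | h <;> simp [h] <;> nlinarith [hB0 ω, hR0 ω]
  have hZ'01 : ∀ ω, 0 ≤ Z' ω ∧ Z' ω ≤ 1 := by
    intro ω
    rw [hZ'eq ω]
    constructor
    · apply div_nonneg _ (hdenpos ω).le
      nlinarith [hZ0 ω, hS0 ω, hB0 ω, hX0 ω]
    · rw [div_le_one (hdenpos ω)]
      nlinarith [hZ1 ω, hS0 ω, hR0 ω, hX1 ω, hX0 ω, hB0 ω]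
  have hDpt : ∀ ω, D ω = X ω * (1 - Z ω) * (B ω / (S ω + B ω))
      - (1 - X ω) * Z ω * (R ω / (S ω + R ω)) := by
    intro ω
    have hSB : (0:ℝ) < S ω + B ω := by nlinarith [hS0 ω, hB0 ω]
    have hSR : (0:ℝ) < S ω + R ω := by nlinarith [hS0 ω, hR0 ω]
    rw [hD]
    simp only [hZ'eq ω]
    rcases hX01 ω with h | h <;> rw [h]
    · have := hSR.ne'; have := hSB.ne'
      simp only [mul_zero, add_zero, sub_zero, mul_one, zero_mul, one_mul, zero_sub]
      field_simp
      ring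
    · have := hSR.ne'; have := hSB.ne'
      simp only [mul_zero, add_zero, sub_zero, mul_one, zero_mul, one_mul, sub_self]
      field_simp
      ring
  have hZ'm0 : Measurable[m0] Z' := by
    have h : Z' = fun ω => (Z ω * S ω + B ω * X ω) / (S ω + B ω * X ω + R ω * (1 - X ω)) :=
      funext hZ'eq
    rw [h]
    exact ((hZm0.mul hSm0).add (hBm.mul hXm)).div
      (((hSm0.add (hBm.mul hXm))).add (hRm.mul (measurable_const.sub hXm)))
  have hZ'int : Integrable Z' μ := by
    refine Integrable.mono' (integrable_const 1) hZ'm0.aestronglyMeasurable ?_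
    exact Eventually.of_forall fun ω => by
      rw [Real.norm_eq_abs, abs_of_nonneg (hZ'01 ω).1]; exact (hZ'01 ω).2
  have hZint : Integrable Z μ := by
    refine Integrable.mono' (integrable_const 1) hZm0.aestronglyMeasurable ?_
    exact Eventually.of_forall fun ω => by
      rw [Real.norm_eq_abs, abs_of_nonneg (hZ0 ω)]; exact hZ1 ω
  have hXint : Integrable X μ := by
    refine Integrable.mono' (integrable_const 1) hXm.aestronglyMeasurable ?_
    exact Eventually.of_forall fun ω => by
      rw [Real.norm_eq_abs, abs_of_nonneg (hX0 ω)]; exact hX1 ω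
  have hDint : Integrable D μ := hZ'int.sub hZint
  haveI : SigmaFinite (μ.trim hm) := (isFiniteMeasure_trim hm).toSigmaFinite
  -- the set-integral identity
  have indep_mono : ∀ {m₁ m₂ m₃ : MeasurableSpace Ω}, Indep m₁ m₂ μ → m₃ ≤ m₂ →
      Indep m₁ m₃ μ := by
    intro m₁ m₂ m₃ h h32
    rw [Indep_iff] at h ⊢
    exact fun t1 t2 ht1 ht2 => h t1 t2 ht1 (h32 _ ht2)
  have hsetint : ∀ A : Set Ω, MeasurableSet[m] A → ∫ ω in A, C ω ∂μ = ∫ ω in A, D ω ∂μ := by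
    intro A hA
    have hA0 : MeasurableSet[m0] A := hm A hA
    have hmXle : (m ⊔ MeasurableSpace.comap X inferInstance) ≤ m0 :=
      sup_le hm (measurable_iff_comap_le.mp hXm)
    set P : Ω → ℝ × ℝ := fun ω => (B ω, R ω) with hP
    set I : Ω → ℝ := A.indicator (fun _ => (1:ℝ)) with hI
    set V : Ω → ℝ × ℝ × ℝ × ℝ := fun ω => (I ω, S ω, Z ω, X ω) with hV
    have hI01 : ∀ ω, 0 ≤ I ω ∧ I ω ≤ 1 := by
      intro ω; by_cases hω : ω ∈ A <;> simp [hI, hω]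
    have hPm : Measurable[m0] P := hBm.prodMk hRm
    have hXmX : Measurable[m ⊔ MeasurableSpace.comap X inferInstance] X :=
      (measurable_iff_comap_le.mpr le_rfl).mono le_sup_right le_rfl
    have hVmX : Measurable[m ⊔ MeasurableSpace.comap X inferInstance] V := by
      refine Measurable.prodMk ?_ (Measurable.prodMk ?_ (Measurable.prodMk ?_ hXmX))
      · exact (measurable_const.indicator hA).mono le_sup_left le_rfl
      · exact hSm.mono le_sup_left le_rfl
      · exact hZm.mono le_sup_left le_rfl
    have hVm0 : Measurable[m0] V := hVmX.mono hmXle le_rfl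
    have hPVind : Indep (MeasurableSpace.comap P inferInstance)
        (MeasurableSpace.comap V inferInstance) μ :=
      indep_mono hindep (measurable_iff_comap_le.mp hVmX)
    have hPV : IndepFun P V μ := by
      rw [indepFun_iff_measure_inter_preimage_eq_mul]
      rw [Indep_iff] at hPVind
      intro s t hs ht
      exact hPVind _ _ ⟨s, hs, rfl⟩ ⟨t, ht, rfl⟩
    -- step 1 : pointwise identity on the integrand
    have hpt : ∀ ω, A.indicator D ω = Gfun c (P ω) (V ω) := by
      intro ω
      unfold Gfun
      simp only [hV, hP]
      rw [cl01_eq (hI01 ω).1 (hI01 ω).2, cl01_eq (hZ0 ω) (hZ1 ω), cl01_eq (hX0 ω) (hX1 ω),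
        qf_eq hc (hSc ω) (hB0 ω), qf_eq hc (hSc ω) (hR0 ω)]
      by_cases hω : ω ∈ A
      · rw [Set.indicator_of_mem hω, hI, Set.indicator_of_mem hω, hDpt ω]
        ring
      · rw [Set.indicator_of_notMem hω, hI, Set.indicator_of_notMem hω]
        ring
    have step1 : ∫ ω in A, D ω ∂μ = ∫ ω, Gfun c (P ω) (V ω) ∂μ := by
      rw [my_integral_indicator (μ := μ) hA0]
      exact integral_congr_ae (Eventually.of_forall hpt)
    have step2 := fubini_indep P V hPm hVm0 hPV (Gfun c)
      ((Gfun_continuous hc).measurable) (Gfun_abs_le hc)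
    -- step 3 : evaluate the inner integral
    have step3 : ∀ ω, (∫ ω', Gfun c (P ω') (V ω) ∂μ) =
        I ω * (X ω * (1 - Z ω) * φB (S ω) - (1 - X ω) * Z ω * φR (S ω)) := by
      intro ω
      have hptin : ∀ ω', Gfun c (P ω') (V ω) = I ω *
          (X ω * (1 - Z ω) * qf c (S ω) (B ω') - (1 - X ω) * Z ω * qf c (S ω) (R ω')) := by
        intro ω'
        unfold Gfun
        simp only [hV, hP]
        rw [cl01_eq (hI01 ω).1 (hI01 ω).2, cl01_eq (hZ0 ω) (hZ1 ω), cl01_eq (hX0 ω) (hX1 ω)]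
      rw [integral_congr_ae (Eventually.of_forall hptin), integral_const_mul,
        integral_sub ((hqiB (S ω)).const_mul _) ((hqiR (S ω)).const_mul _),
        integral_const_mul, integral_const_mul]
    -- step 4 : replace X by Z via the conditional expectation hypothesis
    set K1 : Ω → ℝ := fun ω => (1 - Z ω) * φB (S ω) with hK1
    set K2 : Ω → ℝ := fun ω => Z ω * φR (S ω) with hK2
    set K : Ω → ℝ := fun ω => K1 ω + K2 ω with hK
    have hK1m : Measurable[m] K1 := (measurable_const.sub hZm).mul (hφBm.comp hSm)
    have hK2m : Measurable[m] K2 := hZm.mul (hφRm.comp hSm)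
    have hKm : Measurable[m] K := hK1m.add hK2m
    have hK1bd : ∀ ω, 0 ≤ K1 ω ∧ K1 ω ≤ 1 := by
      intro ω
      have h1 := hφB01 (S ω)
      have hz := hZ0 ω; have hz1 := hZ1 ω
      constructor
      · exact mul_nonneg (by linarith) h1.1
      · exact mul_le_one₀ (by linarith) h1.1 h1.2
    have hK2bd' : ∀ ω, 0 ≤ K2 ω ∧ K2 ω ≤ 1 := by
      intro ω
      have h2 := hφR01 (S ω)
      have hz := hZ0 ω; have hz1 := hZ1 ω
      constructor
      · exact mul_nonneg hz h2.1
      · exact mul_le_one₀ hz1 h2.1 h2.2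
    have hKbd : ∀ ω, |K ω| ≤ 2 := by
      intro ω
      have h1 := hK1bd ω; have h2 := hK2bd' ω
      rw [hK, abs_le]
      constructor <;> simp only [] <;> linarith [h1.1, h1.2, h2.1, h2.2]
    have hK2bd : ∀ ω, |K2 ω| ≤ 1 := by
      intro ω
      have h2 := hK2bd' ω
      rw [abs_le]; constructor <;> linarith [h2.1, h2.2]
    have hKm0 : Measurable[m0] K := hKm.mono hm le_rfl
    have hK2m0 : Measurable[m0] K2 := hK2m.mono hm le_rfl
    have hKint : Integrable K μ := by
      refine Integrable.mono' (integrable_const 2) hKm0.aestronglyMeasurable ?_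
      exact Eventually.of_forall fun ω => by rw [Real.norm_eq_abs]; exact hKbd ω
    have hK2int : Integrable K2 μ := by
      refine Integrable.mono' (integrable_const 1) hK2m0.aestronglyMeasurable ?_
      exact Eventually.of_forall fun ω => by rw [Real.norm_eq_abs]; exact hK2bd ω
    have hKXint : Integrable (K * X) μ := by
      refine Integrable.mono' (integrable_const 2) (hKm0.mul hXm).aestronglyMeasurable ?_
      refine Eventually.of_forall fun ω => ?_
      rw [Real.norm_eq_abs, Pi.mul_apply, abs_mul]
      calc |K ω| * |X ω| ≤ 2 * 1 := by
            refine mul_le_mul (hKbd ω) ?_ (abs_nonneg _) (by norm_num)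
            rw [abs_of_nonneg (hX0 ω)]; exact hX1 ω
        _ = 2 := by norm_num
    have hmul : μ[K * X|m] =ᵐ[μ] K * μ[X|m] :=
      condExp_stronglyMeasurable_mul_of_bound hm hKm.stronglyMeasurable hXint 2
        (Eventually.of_forall fun ω => by rw [Real.norm_eq_abs]; exact hKbd ω)
    have hsubst : ∫ ω in A, K ω * X ω ∂μ = ∫ ω in A, K ω * Z ω ∂μ := by
      have e1 : ∫ ω in A, K ω * X ω ∂μ = ∫ ω in A, (μ[K * X|m]) ω ∂μ :=
        (setIntegral_condExp hm hKXint hA).symm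
      have e2 : ∫ ω in A, (μ[K * X|m]) ω ∂μ = ∫ ω in A, K ω * (μ[X|m]) ω ∂μ :=
        my_setIntegral_congr_ae (μ := μ) hA0 (hmul.mono fun ω h _ => h)
      have e3 : ∫ ω in A, K ω * (μ[X|m]) ω ∂μ = ∫ ω in A, K ω * Z ω ∂μ :=
        my_setIntegral_congr_ae (μ := μ) hA0 (hZX.symm.mono fun ω h _ => by rw [h])
      rw [e1, e2, e3]
    -- assemble
    have hKsplit : ∀ ω, X ω * (1 - Z ω) * φB (S ω) - (1 - X ω) * Z ω * φR (S ω)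
        = K ω * X ω - K2 ω := by
      intro ω; rw [hK, hK1, hK2]; ring
    have step4 : ∫ ω, I ω * (X ω * (1 - Z ω) * φB (S ω) - (1 - X ω) * Z ω * φR (S ω)) ∂μ
        = ∫ ω in A, (K ω * X ω - K2 ω) ∂μ := by
      rw [my_integral_indicator (μ := μ) hA0]
      refine integral_congr_ae (Eventually.of_forall fun ω => ?_)
      by_cases hω : ω ∈ A
      · simp only [hI, Set.indicator_of_mem hω, one_mul, hK, hK1, hK2]
        ring
      · simp only [hI, Set.indicator_of_notMem hω, zero_mul]
    have hCpt : ∀ ω, K ω * Z ω - K2 ω = C ω := by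
      intro ω; rw [hC, hK, hK1, hK2]; ring
    calc ∫ ω in A, C ω ∂μ = ∫ ω in A, (K ω * Z ω - K2 ω) ∂μ :=
          my_setIntegral_congr_ae (μ := μ) hA0 (Eventually.of_forall fun ω _ => (hCpt ω).symm)
      _ = ∫ ω in A, K ω * Z ω ∂μ - ∫ ω in A, K2 ω ∂μ := by
          refine integral_sub ?_ (hK2int.mono_measure Measure.restrict_le_self)
          refine Integrable.mono_measure ?_ Measure.restrict_le_self
          refine Integrable.mono' (integrable_const 2) (hKm0.mul hZm0).aestronglyMeasurable ?_
          refine Eventually.of_forall fun ω => ?_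
          rw [Real.norm_eq_abs, abs_mul]
          calc |K ω| * |Z ω| ≤ 2 * 1 := by
                refine mul_le_mul (hKbd ω) ?_ (abs_nonneg _) (by norm_num)
                rw [abs_of_nonneg (hZ0 ω)]; exact hZ1 ω
            _ = 2 := by norm_num
      _ = ∫ ω in A, K ω * X ω ∂μ - ∫ ω in A, K2 ω ∂μ := by rw [hsubst]
      _ = ∫ ω in A, (K ω * X ω - K2 ω) ∂μ := by
          refine (integral_sub ?_ (hK2int.mono_measure Measure.restrict_le_self)).symm
          have := hKXint.mono_measure (Measure.restrict_le_self (μ := μ) (s := A))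
          exact this.congr (Eventually.of_forall fun ω => rfl)
      _ = ∫ ω, I ω * (X ω * (1 - Z ω) * φB (S ω) - (1 - X ω) * Z ω * φR (S ω)) ∂μ :=
          step4.symm
      _ = ∫ ω, (∫ ω', Gfun c (P ω') (V ω) ∂μ) ∂μ :=
          (integral_congr_ae (Eventually.of_forall fun ω => (step3 ω))).symm
      _ = ∫ ω, Gfun c (P ω) (V ω) ∂μ := step2.symm
      _ = ∫ ω in A, D ω ∂μ := step1.symm
  -- C is the conditional expectation of D
  have hCm : Measurable[m] C := (hZm.mul (measurable_const.sub hZm)).mul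
    (((hφBm.comp hSm).sub (hφRm.comp hSm)))
  have hCm0 : Measurable[m0] C := hCm.mono hm le_rfl
  have hCabs : ∀ ω, |C ω| ≤ 2 := by
    intro ω
    rw [hC]
    have h1 := hφB01 (S ω); have h2 := hφR01 (S ω)
    have hz := hZ0 ω; have hz1 := hZ1 ω
    rw [abs_mul]
    have t1 : |Z ω * (1 - Z ω)| ≤ 1 := by
      rw [abs_of_nonneg (by nlinarith)]; nlinarith
    have t2 : |φB (S ω) - φR (S ω)| ≤ 2 := by rw [abs_sub_le_iff]; constructor <;> linarith
    calc |Z ω * (1 - Z ω)| * |φB (S ω) - φR (S ω)| ≤ 1 * 2 :=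
        mul_le_mul t1 t2 (abs_nonneg _) one_pos.le
      _ = 2 := by norm_num
  have hCint : Integrable C μ := by
    refine Integrable.mono' (integrable_const 2) hCm0.aestronglyMeasurable ?_
    exact Eventually.of_forall fun ω => by rw [Real.norm_eq_abs]; exact hCabs ω
  have hCcond : C =ᵐ[μ] μ[D|m] :=
    ae_eq_condExp_of_forall_setIntegral_eq hm hDint
      (fun s _ _ => hCint.mono_measure Measure.restrict_le_self)
      (fun s hs _ => hsetint s hs)
      ⟨C, hCm.stronglyMeasurable, EventuallyEq.rfl⟩
  -- conclude
  have hsub : μ[D|m] =ᵐ[μ] μ[Z'|m] - μ[Z|m] := condExp_sub hZ'int hZint m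
  have hZfix : μ[Z|m] = Z := condExp_of_stronglyMeasurable hm hZm.stronglyMeasurable hZint
  filter_upwards [hCcond, hsub] with ω h1 h2
  have hval : (μ[Z'|m]) ω - Z ω = C ω := by
    rw [h1, h2]; simp [hZfix]
  rw [hval]
  -- final bound
  have hs := hS0 ω
  have hφBeq : φB (S ω) = ∫ ω', B ω' / (S ω + B ω') ∂μ :=
    integral_congr_ae (Eventually.of_forall fun ω' => qf_eq hc (hSc ω) (hB0 ω'))
  have hφReq : φR (S ω) = ∫ ω', R ω' / (S ω + R ω') ∂μ :=
    integral_congr_ae (Eventually.of_forall fun ω' => qf_eq hc (hSc ω) (hR0 ω'))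
  have hbd : |φB (S ω) - φR (S ω)| ≤ (∫ ω', B ω' ^ 2 ∂μ + ∫ ω', R ω' ^ 2 ∂μ) / (S ω) ^ 2 := by
    rw [hφBeq, hφReq]
    exact phi_diff_bound B R hB0 hR0 hBm hRm hBL2 hRL2 hmean hs
  have hz := hZ0 ω; have hz1 := hZ1 ω
  rw [hC, abs_mul]
  have t1 : |Z ω * (1 - Z ω)| ≤ 1 := by
    rw [abs_of_nonneg (by nlinarith)]; nlinarith
  calc |Z ω * (1 - Z ω)| * |φB (S ω) - φR (S ω)|
      ≤ 1 * ((∫ ω', B ω' ^ 2 ∂μ + ∫ ω', R ω' ^ 2 ∂μ) / (S ω) ^ 2) :=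
        mul_le_mul t1 hbd (abs_nonneg _) one_pos.le
    _ = _ := one_mul _

theorem stmt9
    {Ω : Type*} {m0 : MeasurableSpace Ω} {μ : Measure Ω} [IsProbabilityMeasure μ]
    (𝒢 : ℕ → MeasurableSpace Ω) (h𝒢mono : Monotone 𝒢) (h𝒢le : ∀ n, 𝒢 n ≤ m0)
    (b r : ℝ) (hb : 0 < b) (hr : 0 < r)
    (X B R : ℕ → Ω → ℝ)
    (hX01 : ∀ n ω, X n ω = 0 ∨ X n ω = 1)
    (hB0 : ∀ n ω, 0 ≤ B n ω) (hR0 : ∀ n ω, 0 ≤ R n ω)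
    (hmeas : ∀ n k, 1 ≤ k → k ≤ n →
      Measurable[𝒢 n] (X k) ∧ Measurable[𝒢 n] (B k) ∧ Measurable[𝒢 n] (R k))
    (hL2 : ∀ n, MemLp (B n) 2 μ ∧ MemLp (R n) 2 μ)
    (hindep : ∀ n, Indep
      (MeasurableSpace.comap (fun ω => (B (n + 1) ω, R (n + 1) ω)) inferInstance)
      (𝒢 n ⊔ MeasurableSpace.comap (X (n + 1)) inferInstance) μ)
    (hmean : ∀ n, ∫ ω, B (n + 1) ω ∂μ = ∫ ω, R (n + 1) ω ∂μ)
    (S : ℕ → Ω → ℝ)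
    (hS : ∀ n ω, S n ω =
      b + r + ∑ k ∈ Finset.Icc 1 n, (B k ω * X k ω + R k ω * (1 - X k ω)))
    (Z : ℕ → Ω → ℝ)
    (hZ : ∀ n ω, Z n ω = (b + ∑ k ∈ Finset.Icc 1 n, B k ω * X k ω) / S n ω)
    (hZcond : ∀ n, Z n =ᵐ[μ] μ[X (n + 1)|𝒢 n]) :
    ∀ n, ∀ᵐ ω ∂μ,
      |(μ[Z (n + 1)|𝒢 n]) ω - Z n ω| ≤
        (∫ ω', (B (n + 1) ω') ^ 2 ∂μ + ∫ ω', (R (n + 1) ω') ^ 2 ∂μ) / (S n ω) ^ 2 := by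
  intro n
  have hX0 : ∀ k ω, 0 ≤ X k ω := fun k ω => by rcases hX01 k ω with h | h <;> simp [h]
  have hX1 : ∀ k ω, X k ω ≤ 1 := fun k ω => by rcases hX01 k ω with h | h <;> simp [h]
  have hterm1 : ∀ k ω, 0 ≤ B k ω * X k ω := fun k ω => mul_nonneg (hB0 k ω) (hX0 k ω)
  have hterm2 : ∀ k ω, 0 ≤ R k ω * (1 - X k ω) := fun k ω =>
    mul_nonneg (hR0 k ω) (by linarith [hX1 k ω])
  -- S bounds
  have hSc : ∀ ω, b + r ≤ S n ω := by
    intro ω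
    rw [hS n ω]
    have : (0:ℝ) ≤ ∑ k ∈ Finset.Icc 1 n, (B k ω * X k ω + R k ω * (1 - X k ω)) :=
      Finset.sum_nonneg fun k _ => add_nonneg (hterm1 k ω) (hterm2 k ω)
    linarith
  have hS0 : ∀ ω, 0 < S n ω := fun ω => lt_of_lt_of_le (by linarith) (hSc ω)
  -- numerator facts
  have hN0 : ∀ ω, 0 ≤ b + ∑ k ∈ Finset.Icc 1 n, B k ω * X k ω := by
    intro ω
    have : (0:ℝ) ≤ ∑ k ∈ Finset.Icc 1 n, B k ω * X k ω :=
      Finset.sum_nonneg fun k _ => hterm1 k ω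
    linarith
  have hNS : ∀ ω, b + ∑ k ∈ Finset.Icc 1 n, B k ω * X k ω ≤ S n ω := by
    intro ω
    rw [hS n ω, Finset.sum_add_distrib]
    have : (0:ℝ) ≤ ∑ k ∈ Finset.Icc 1 n, R k ω * (1 - X k ω) :=
      Finset.sum_nonneg fun k _ => hterm2 k ω
    linarith
  -- Z bounds
  have hZ0 : ∀ ω, 0 ≤ Z n ω := fun ω => by
    rw [hZ n ω]; exact div_nonneg (hN0 ω) (hS0 ω).le
  have hZ1 : ∀ ω, Z n ω ≤ 1 := fun ω => by
    rw [hZ n ω, div_le_one (hS0 ω)]; exact hNS ω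
  -- measurability
  have hSm : Measurable[𝒢 n] (S n) := by
    have h : S n = fun ω =>
        b + r + ∑ k ∈ Finset.Icc 1 n, (B k ω * X k ω + R k ω * (1 - X k ω)) :=
      funext (hS n)
    rw [h]
    refine Measurable.add measurable_const (Finset.measurable_sum _ fun k hk => ?_)
    rw [Finset.mem_Icc] at hk
    obtain ⟨hmX, hmB, hmR⟩ := hmeas n k hk.1 hk.2
    exact (hmB.mul hmX).add (hmR.mul (measurable_const.sub hmX))
  have hZm : Measurable[𝒢 n] (Z n) := by
    have h : Z n = fun ω => (b + ∑ k ∈ Finset.Icc 1 n, B k ω * X k ω) / S n ω :=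
      funext (hZ n)
    rw [h]
    refine Measurable.div ?_ hSm
    refine Measurable.add measurable_const (Finset.measurable_sum _ fun k hk => ?_)
    rw [Finset.mem_Icc] at hk
    obtain ⟨hmX, hmB, hmR⟩ := hmeas n k hk.1 hk.2
    exact hmB.mul hmX
  obtain ⟨hmX1, hmB1, hmR1⟩ := hmeas (n + 1) (n + 1) (by omega) le_rfl
  have hXm : Measurable[m0] (X (n + 1)) := hmX1.mono (h𝒢le (n + 1)) le_rfl
  have hBm : Measurable[m0] (B (n + 1)) := hmB1.mono (h𝒢le (n + 1)) le_rfl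
  have hRm : Measurable[m0] (R (n + 1)) := hmR1.mono (h𝒢le (n + 1)) le_rfl
  -- recursion identity
  have hZ'eq : ∀ ω, Z (n + 1) ω = (Z n ω * S n ω + B (n + 1) ω * X (n + 1) ω) /
      (S n ω + B (n + 1) ω * X (n + 1) ω + R (n + 1) ω * (1 - X (n + 1) ω)) := by
    intro ω
    have hNZ : Z n ω * S n ω = b + ∑ k ∈ Finset.Icc 1 n, B k ω * X k ω := by
      rw [hZ n ω]
      exact div_mul_cancel₀ _ (hS0 ω).ne'
    have hsplit1 : ∑ k ∈ Finset.Icc 1 (n + 1), B k ω * X k ω =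
        (∑ k ∈ Finset.Icc 1 n, B k ω * X k ω) + B (n + 1) ω * X (n + 1) ω :=
      Finset.sum_Icc_succ_top (by omega) _
    have hsplit2 : ∑ k ∈ Finset.Icc 1 (n + 1), (B k ω * X k ω + R k ω * (1 - X k ω)) =
        (∑ k ∈ Finset.Icc 1 n, (B k ω * X k ω + R k ω * (1 - X k ω)))
          + (B (n + 1) ω * X (n + 1) ω + R (n + 1) ω * (1 - X (n + 1) ω)) :=
      Finset.sum_Icc_succ_top (by omega) _
    rw [hZ (n + 1) ω, hS (n + 1) ω, hsplit1, hsplit2, hNZ, hS n ω]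
    congr 1 <;> ring
  exact key_step (h𝒢le n) (by linarith : (0:ℝ) < b + r)
    (X (n + 1)) (B (n + 1)) (R (n + 1)) (S n) (Z n) (Z (n + 1))
    (hX01 (n + 1)) (hB0 (n + 1)) (hR0 (n + 1)) hSm hZm hXm hBm hRm hSc hZ0 hZ1
    (hL2 (n + 1)).1 (hL2 (n + 1)).2 (hindep n) (hmean n) (hZcond n) hZ'eq
end

section
/- In the multicolor randomly reinforced urn with d colors, for each color j, the conditional increment satisfies |E[Z_{n+1,j} | G_n] − Z_{n,j}| ≤ (∑_{i=1}^d E[A_{n+1,i}^2]) / S_n^2 almost surely, provided E[A_{n,i}] = E[A_{n,1}] for all n and i. -/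
open MeasureTheory Filter Real ProbabilityTheory
open scoped ENNReal NNReal Topology

set_option maxHeartbeats 2000000 in
theorem stmt18
    {Ω : Type*} {m0 : MeasurableSpace Ω} {μ : Measure Ω} [IsProbabilityMeasure μ]
    (𝒢 : ℕ → MeasurableSpace Ω) (h𝒢mono : Monotone 𝒢) (h𝒢le : ∀ n, 𝒢 n ≤ m0)
    (d : ℕ) (hd : 2 ≤ d)
    (a : Fin d → ℝ) (ha : ∀ j, 0 < a j)
    (X A : ℕ → Fin d → Ω → ℝ)
    (hX01 : ∀ n j ω, X n j ω = 0 ∨ X n j ω = 1)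
    (hXsum : ∀ n ω, ∑ j, X n j ω = 1)
    (hA0 : ∀ n j ω, 0 ≤ A n j ω)
    (hAL2 : ∀ n j, MemLp (A n j) 2 μ)
    (hmeas : ∀ n k j, 1 ≤ k → k ≤ n →
      Measurable[𝒢 n] (X k j) ∧ Measurable[𝒢 n] (A k j))
    (hindep : ∀ n, Indep
      (MeasurableSpace.comap (fun ω => fun j => A (n + 1) j ω) inferInstance)
      (𝒢 n ⊔ MeasurableSpace.comap (fun ω => fun j => X (n + 1) j ω) inferInstance) μ)
    (hmean : ∀ n j, ∫ ω, A n j ω ∂μ = ∫ ω, A n ⟨0, by omega⟩ ω ∂μ)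
    (S : ℕ → Ω → ℝ)
    (hS : ∀ n ω, S n ω =
      (∑ i, a i) + ∑ k ∈ Finset.Icc 1 n, ∑ i, A k i ω * X k i ω)
    (Z : ℕ → Fin d → Ω → ℝ)
    (hZ : ∀ n j ω, Z n j ω =
      (a j + ∑ k ∈ Finset.Icc 1 n, A k j ω * X k j ω) / S n ω)
    (hZcond : ∀ n j, Z n j =ᵐ[μ] μ[X (n + 1) j|𝒢 n]) :
    ∀ n : ℕ, ∀ j : Fin d, ∀ᵐ ω ∂μ,
      |(μ[Z (n + 1) j|𝒢 n]) ω - Z n j ω| ≤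
        (∑ i, ∫ ω', (A (n + 1) i ω') ^ 2 ∂μ) / (S n ω) ^ 2 := by
  intro n j
  haveI : Nonempty (Fin d) := ⟨⟨0, by omega⟩⟩
  have hm : 𝒢 n ≤ m0 := h𝒢le n
  -- basic pointwise facts about X
  have hX0 : ∀ k i ω, 0 ≤ X k i ω := fun k i ω => by
    rcases hX01 k i ω with h | h <;> simp [h]
  have hX1 : ∀ k i ω, X k i ω ≤ 1 := fun k i ω => by
    rcases hX01 k i ω with h | h <;> simp [h]
  have hapos : 0 < ∑ i, a i := Finset.sum_pos (fun i _ => ha i) Finset.univ_nonempty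
  -- measurability (w.r.t. m0) of the new draws
  have hXmeas : ∀ i, Measurable (X (n + 1) i) := fun i =>
    ((hmeas (n + 1) (n + 1) i (by omega) le_rfl).1).mono (h𝒢le (n + 1)) le_rfl
  have hAmeas : ∀ i, Measurable (A (n + 1) i) := fun i =>
    ((hmeas (n + 1) (n + 1) i (by omega) le_rfl).2).mono (h𝒢le (n + 1)) le_rfl
  -- measurability of S n and Z n w.r.t. 𝒢 n
  have hSm : Measurable[𝒢 n] (S n) := by
    have h : S n = fun ω => (∑ i, a i) + ∑ k ∈ Finset.Icc 1 n, ∑ i, A k i ω * X k i ω :=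
      funext (hS n)
    rw [h]
    refine measurable_const.add (Finset.measurable_sum _ fun k hk => ?_)
    refine Finset.measurable_sum _ fun i _ => ?_
    obtain ⟨hk1, hk2⟩ := Finset.mem_Icc.mp hk
    exact ((hmeas n k i hk1 hk2).2).mul ((hmeas n k i hk1 hk2).1)
  have hZm : ∀ i, Measurable[𝒢 n] (Z n i) := by
    intro i
    have h : Z n i = fun ω => (a i + ∑ k ∈ Finset.Icc 1 n, A k i ω * X k i ω) / S n ω :=
      funext (hZ n i)
    rw [h]
    refine Measurable.div ?_ hSm
    refine measurable_const.add (Finset.measurable_sum _ fun k hk => ?_)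
    obtain ⟨hk1, hk2⟩ := Finset.mem_Icc.mp hk
    exact ((hmeas n k i hk1 hk2).2).mul ((hmeas n k i hk1 hk2).1)
  have hZmeas : ∀ i, Measurable (Z n i) := fun i => (hZm i).mono hm le_rfl
  have hSmeas : Measurable (S n) := hSm.mono hm le_rfl
  -- positivity of S
  have hS_ge : ∀ ω, (∑ i, a i) ≤ S n ω := by
    intro ω
    rw [hS n ω]
    refine le_add_of_nonneg_right (Finset.sum_nonneg fun k _ => Finset.sum_nonneg fun i _ =>
      mul_nonneg (hA0 _ _ _) (hX0 _ _ _))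
  have hSpos : ∀ ω, 0 < S n ω := fun ω => lt_of_lt_of_le hapos (hS_ge ω)
  -- the increment T
  set T : Ω → ℝ := fun ω => ∑ i, A (n + 1) i ω * X (n + 1) i ω with hT_def
  have hT0 : ∀ ω, 0 ≤ T ω := fun ω =>
    Finset.sum_nonneg fun i _ => mul_nonneg (hA0 _ _ _) (hX0 _ _ _)
  have hTmeas : Measurable T := Finset.measurable_sum _ fun i _ => (hAmeas i).mul (hXmeas i)
  have hS1 : ∀ ω, S (n + 1) ω = S n ω + T ω := by
    intro ω
    rw [hS (n + 1) ω, hS n ω, Finset.sum_Icc_succ_top (by omega : 1 ≤ n + 1), hT_def]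
    ring
  -- numerators
  set N : Fin d → Ω → ℝ := fun i ω => a i + ∑ k ∈ Finset.Icc 1 n, A k i ω * X k i ω with hN_def
  have hN0 : ∀ i ω, 0 ≤ N i ω := fun i ω =>
    add_nonneg (ha i).le (Finset.sum_nonneg fun k _ => mul_nonneg (hA0 _ _ _) (hX0 _ _ _))
  have hNsum : ∀ ω, ∑ i, N i ω = S n ω := by
    intro ω
    rw [hS n ω, hN_def]
    rw [Finset.sum_add_distrib, Finset.sum_comm]
  have hNle : ∀ i ω, N i ω ≤ S n ω := by
    intro i ω
    rw [← hNsum ω]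
    exact Finset.single_le_sum (fun i _ => hN0 i ω) (Finset.mem_univ i)
  have hzeq : ∀ i ω, Z n i ω = N i ω / S n ω := fun i ω => by rw [hZ n i ω, hN_def]
  have hZ0 : ∀ i ω, 0 ≤ Z n i ω := fun i ω => by
    rw [hzeq]; exact div_nonneg (hN0 i ω) (hSpos ω).le
  have hZ1 : ∀ i ω, Z n i ω ≤ 1 := fun i ω => by
    rw [hzeq]; exact (div_le_one (hSpos ω)).mpr (hNle i ω)
  have hZ1e : ∀ ω, Z (n + 1) j ω = (N j ω + A (n + 1) j ω * X (n + 1) j ω) / (S n ω + T ω) := by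
    intro ω
    rw [hZ (n + 1) j ω, Finset.sum_Icc_succ_top (by omega : 1 ≤ n + 1), hS1 ω, hN_def]
    ring
  have hZ10 : ∀ ω, 0 ≤ Z (n + 1) j ω := by
    intro ω
    rw [hZ1e ω]
    exact div_nonneg (add_nonneg (hN0 j ω) (mul_nonneg (hA0 _ _ _) (hX0 _ _ _)))
      (add_nonneg (hSpos ω).le (hT0 ω))
  have hZ11 : ∀ ω, Z (n + 1) j ω ≤ 1 := by
    intro ω
    rw [hZ1e ω]
    refine (div_le_one (by have := hSpos ω; have := hT0 ω; linarith)).mpr ?_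
    have h1 : A (n + 1) j ω * X (n + 1) j ω ≤ T ω := by
      show _ ≤ ∑ i, A (n + 1) i ω * X (n + 1) i ω
      exact Finset.single_le_sum
        (fun (i : Fin d) _ => mul_nonneg (hA0 (n + 1) i ω) (hX0 (n + 1) i ω))
        (Finset.mem_univ j)
    linarith [hNle j ω]
  -- T^2 as a sum
  have hone : ∀ ω, ∃ i0, X (n + 1) i0 ω = 1 ∧ ∀ i, i ≠ i0 → X (n + 1) i ω = 0 := by
    intro ω
    have hsum := hXsum (n + 1) ω
    by_cases h : ∃ i0, X (n + 1) i0 ω = 1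
    · obtain ⟨i0, hi0⟩ := h
      refine ⟨i0, hi0, fun i hi => ?_⟩
      have hsplit := Finset.add_sum_erase Finset.univ (fun i => X (n + 1) i ω)
        (Finset.mem_univ i0)
      have h2 : ∑ i ∈ Finset.univ.erase i0, X (n + 1) i ω = 0 := by
        rw [← hsplit] at hsum
        simp only [hi0] at hsum
        linarith
      exact (Finset.sum_eq_zero_iff_of_nonneg (fun i _ => hX0 _ _ _)).mp h2 i
        (Finset.mem_erase.mpr ⟨hi, Finset.mem_univ i⟩)
    · push_neg at h
      rw [Finset.sum_eq_zero (fun i _ => (hX01 (n + 1) i ω).resolve_right (h i))] at hsum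
      norm_num at hsum
  have hTsq : ∀ ω, T ω ^ 2 = ∑ i, (A (n + 1) i ω) ^ 2 * X (n + 1) i ω := by
    intro ω
    obtain ⟨i0, hi0, hrest⟩ := hone ω
    have hTe : T ω = A (n + 1) i0 ω := by
      show ∑ i, A (n + 1) i ω * X (n + 1) i ω = _
      rw [Finset.sum_eq_single i0 (fun b _ hb => by rw [hrest b hb, mul_zero])
        (fun h => absurd (Finset.mem_univ i0) h)]
      rw [hi0, mul_one]
    rw [hTe, Finset.sum_eq_single i0 (fun b _ hb => by rw [hrest b hb, mul_zero])
      (fun h => absurd (Finset.mem_univ i0) h), hi0, mul_one]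
  -- integrabilities
  have hAint : ∀ i, Integrable (A (n + 1) i) μ := fun i =>
    (hAL2 (n + 1) i).integrable one_le_two
  have hA2int : ∀ i, Integrable (fun ω => (A (n + 1) i ω) ^ 2) μ := fun i =>
    (hAL2 (n + 1) i).integrable_sq
  have hAXint : ∀ i, Integrable (fun ω => A (n + 1) i ω * X (n + 1) i ω) μ := by
    intro i
    refine (hAint i).mono' ((hAmeas i).mul (hXmeas i)).aestronglyMeasurable
      (ae_of_all _ fun ω => ?_)
    rw [Real.norm_eq_abs, abs_mul, abs_of_nonneg (hA0 _ _ _), abs_of_nonneg (hX0 _ _ _)]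
    calc A (n + 1) i ω * X (n + 1) i ω ≤ A (n + 1) i ω * 1 :=
          mul_le_mul_of_nonneg_left (hX1 _ _ _) (hA0 _ _ _)
      _ = A (n + 1) i ω := mul_one _
  have hA2Xint : ∀ i, Integrable (fun ω => (A (n + 1) i ω) ^ 2 * X (n + 1) i ω) μ := by
    intro i
    refine (hA2int i).mono' (((hAmeas i).pow_const 2).mul (hXmeas i)).aestronglyMeasurable
      (ae_of_all _ fun ω => ?_)
    rw [Real.norm_eq_abs, abs_mul, abs_of_nonneg (sq_nonneg _), abs_of_nonneg (hX0 _ _ _)]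
    calc (A (n + 1) i ω) ^ 2 * X (n + 1) i ω ≤ (A (n + 1) i ω) ^ 2 * 1 :=
          mul_le_mul_of_nonneg_left (hX1 _ _ _) (sq_nonneg _)
      _ = (A (n + 1) i ω) ^ 2 := mul_one _
  have hTint : Integrable T μ := by
    have h := integrable_finset_sum (μ := μ) Finset.univ
      (f := fun (i : Fin d) ω => A (n + 1) i ω * X (n + 1) i ω) (fun i _ => hAXint i)
    exact h
  have hT2int : Integrable (fun ω => T ω ^ 2) μ := by
    have h := integrable_finset_sum (μ := μ) Finset.univ
      (f := fun (i : Fin d) ω => (A (n + 1) i ω) ^ 2 * X (n + 1) i ω) (fun i _ => hA2Xint i)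
    have he : (fun ω => T ω ^ 2) = fun ω => ∑ i, (A (n + 1) i ω) ^ 2 * X (n + 1) i ω :=
      funext hTsq
    rw [he]
    exact h
  have hZint : ∀ i, Integrable (Z n i) μ := by
    intro i
    refine (integrable_const (1 : ℝ)).mono' (hZmeas i).aestronglyMeasurable
      (ae_of_all _ fun ω => ?_)
    rw [Real.norm_eq_abs, abs_of_nonneg (hZ0 i ω)]
    exact hZ1 i ω
  have hZm1 : Measurable (Z (n + 1) j) := by
    have h : Z (n + 1) j
        = fun ω => (a j + ∑ k ∈ Finset.Icc 1 (n + 1), A k j ω * X k j ω) / S (n + 1) ω :=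
      funext (hZ (n + 1) j)
    rw [h]
    have hSm1 : Measurable (S (n + 1)) := by
      have h2 : S (n + 1) = fun ω =>
          (∑ i, a i) + ∑ k ∈ Finset.Icc 1 (n + 1), ∑ i, A k i ω * X k i ω :=
        funext (hS (n + 1))
      rw [h2]
      refine measurable_const.add (Finset.measurable_sum _ fun k hk => ?_)
      refine Finset.measurable_sum _ fun i _ => ?_
      obtain ⟨hk1, hk2⟩ := Finset.mem_Icc.mp hk
      exact (((hmeas (n + 1) k i hk1 hk2).2).mul ((hmeas (n + 1) k i hk1 hk2).1)).mono
        (h𝒢le (n + 1)) le_rfl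
    refine Measurable.div ?_ hSm1
    refine measurable_const.add (Finset.measurable_sum _ fun k hk => ?_)
    obtain ⟨hk1, hk2⟩ := Finset.mem_Icc.mp hk
    exact (((hmeas (n + 1) k j hk1 hk2).2).mul ((hmeas (n + 1) k j hk1 hk2).1)).mono
      (h𝒢le (n + 1)) le_rfl
  have hZ1int : Integrable (Z (n + 1) j) μ := by
    refine (integrable_const (1 : ℝ)).mono' hZm1.aestronglyMeasurable
      (ae_of_all _ fun ω => ?_)
    rw [Real.norm_eq_abs, abs_of_nonneg (hZ10 ω)]
    exact hZ11 ω
  -- the comap σ-algebras and the key conditional expectation identity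
  have hpiX : Measurable[m0] (fun ω => fun i => X (n + 1) i ω) :=
    measurable_pi_lambda _ fun i => hXmeas i
  have hpiA : Measurable[m0] (fun ω => fun i => A (n + 1) i ω) :=
    measurable_pi_lambda _ fun i => hAmeas i
  set mX := MeasurableSpace.comap (fun ω => fun i => X (n + 1) i ω) inferInstance with hmX_def
  set mA := MeasurableSpace.comap (fun ω => fun i => A (n + 1) i ω) inferInstance with hmA_def
  set m' := 𝒢 n ⊔ mX with hm'_def
  have hXpi : Measurable[mX] (fun ω => fun i => X (n + 1) i ω) := by
    rw [hmX_def]; exact measurable_iff_comap_le.mpr le_rfl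
  have hXmX : ∀ i, Measurable[mX] (X (n + 1) i) := fun i =>
    (measurable_pi_apply i).comp hXpi
  have hXm' : ∀ i, Measurable[m'] (X (n + 1) i) := fun i =>
    (hXmX i).mono le_sup_right le_rfl
  have hmX_le : mX ≤ m0 := by
    rw [hmX_def]
    exact measurable_iff_comap_le.mp hpiX
  have hm'le : m' ≤ m0 := sup_le hm hmX_le
  have hmm' : 𝒢 n ≤ m' := le_sup_left
  have hmA_le : mA ≤ m0 := by
    rw [hmA_def]
    exact measurable_iff_comap_le.mp hpiA
  have hApi : Measurable[mA] (fun ω => fun i => A (n + 1) i ω) := by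
    rw [hmA_def]; exact measurable_iff_comap_le.mpr le_rfl
  have hAmA : ∀ i, Measurable[mA] (A (n + 1) i) := fun i =>
    (measurable_pi_apply i).comp hApi
  -- generic freezing identity
  have key : ∀ g : Ω → ℝ, Measurable[mA] g → Integrable g μ → ∀ i,
      μ[fun ω => g ω * X (n + 1) i ω|𝒢 n] =ᵐ[μ] fun ω => (∫ ω', g ω' ∂μ) * Z n i ω := by
    intro g hgmA hgint i
    have hgmeas : Measurable[m0] g := hgmA.mono hmA_le le_rfl
    have hXg_int : Integrable (X (n + 1) i * g) μ := by
      refine hgint.abs.mono' ((hXmeas i).mul hgmeas).aestronglyMeasurable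
        (ae_of_all _ fun ω => ?_)
      rw [Pi.mul_apply, Real.norm_eq_abs, abs_mul, abs_of_nonneg (hX0 _ _ _)]
      calc X (n + 1) i ω * |g ω| ≤ 1 * |g ω| :=
            mul_le_mul_of_nonneg_right (hX1 _ _ _) (abs_nonneg _)
        _ = |g ω| := one_mul _
    have hstep1 : μ[fun ω => g ω * X (n + 1) i ω|m'] =ᵐ[μ]
        fun ω => X (n + 1) i ω * (∫ ω', g ω' ∂μ) := by
      have he : (fun ω => g ω * X (n + 1) i ω) = X (n + 1) i * g := by
        funext ω; rw [Pi.mul_apply, mul_comm]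
      rw [he]
      refine (condExp_mul_of_stronglyMeasurable_left ((hXm' i).stronglyMeasurable)
        hXg_int hgint).trans ?_
      have hcg : μ[g|m'] =ᵐ[μ] fun _ => ∫ ω', g ω' ∂μ :=
        condExp_indep_eq hmA_le hm'le hgmA.stronglyMeasurable (hindep n)
      filter_upwards [hcg] with ω hω
      rw [Pi.mul_apply, hω]
    have htower := (condExp_condExp_of_le hmm' hm'le
      (f := fun ω => g ω * X (n + 1) i ω) (μ := μ)).symm
    refine htower.trans ?_
    refine (condExp_congr_ae hstep1).trans ?_
    have he2 : (fun ω => X (n + 1) i ω * (∫ ω', g ω' ∂μ))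
        = (∫ ω', g ω' ∂μ) • X (n + 1) i := by
      funext ω; rw [Pi.smul_apply, smul_eq_mul, mul_comm]
    rw [he2]
    refine (condExp_smul (∫ ω', g ω' ∂μ) (X (n + 1) i) _).trans ?_
    filter_upwards [hZcond n i] with ω hω
    rw [Pi.smul_apply, smul_eq_mul, ← hω]
  -- mean of the reinforcements
  have hcA : ∀ i, (∫ ω', A (n + 1) i ω' ∂μ) = ∫ ω', A (n + 1) j ω' ∂μ := fun i =>
    (hmean (n + 1) i).trans (hmean (n + 1) j).symm
  set c : ℝ := ∫ ω', A (n + 1) j ω' ∂μ with hc_def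
  have keyc : ∀ i, μ[fun ω => A (n + 1) i ω * X (n + 1) i ω|𝒢 n] =ᵐ[μ]
      fun ω => c * Z n i ω := by
    intro i
    have h := key (A (n + 1) i) (hAmA i) (hAint i) i
    rwa [hcA i] at h
  have keyq : ∀ i : Fin d, μ[fun ω => (A (n + 1) i ω) ^ 2 * X (n + 1) i ω|𝒢 n] =ᵐ[μ]
      fun ω => (∫ ω', (A (n + 1) i ω') ^ 2 ∂μ) * Z n i ω := fun i =>
    key (fun ω => (A (n + 1) i ω) ^ 2) ((hAmA i).pow_const 2) (hA2int i) i
  have hZsum : ∀ ω, ∑ i, Z n i ω = 1 := by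
    intro ω
    have h : ∑ i, Z n i ω = (∑ i, N i ω) / S n ω := by
      rw [Finset.sum_div]
      exact Finset.sum_congr rfl fun i _ => hzeq i ω
    rw [h, hNsum ω, div_self (hSpos ω).ne']
  have hTcond : μ[T|𝒢 n] =ᵐ[μ] fun _ => c := by
    have hTsum : T = ∑ i : Fin d, fun ω => A (n + 1) i ω * X (n + 1) i ω := by
      funext ω
      show ∑ i, A (n + 1) i ω * X (n + 1) i ω = _
      rw [Finset.sum_apply]
    have h1 : μ[T|𝒢 n] =ᵐ[μ]
        ∑ i : Fin d, μ[fun ω => A (n + 1) i ω * X (n + 1) i ω|𝒢 n] := by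
      rw [hTsum]
      exact condExp_finsetSum (fun i _ => hAXint i) _
    have hall : ∀ᵐ ω ∂μ, ∀ i : Fin d,
        (μ[fun ω => A (n + 1) i ω * X (n + 1) i ω|𝒢 n]) ω = c * Z n i ω :=
      ae_all_iff.mpr fun i => keyc i
    filter_upwards [h1, hall] with ω h1ω hallω
    rw [h1ω, Finset.sum_apply]
    calc ∑ i, (μ[fun ω => A (n + 1) i ω * X (n + 1) i ω|𝒢 n]) ω
        = ∑ i, c * Z n i ω := Finset.sum_congr rfl fun i _ => hallω i
      _ = c * ∑ i, Z n i ω := by rw [Finset.mul_sum]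
      _ = c := by rw [hZsum ω, mul_one]
  -- the first order term D1 and the remainder Y
  have hAXleT : ∀ ω, A (n + 1) j ω * X (n + 1) j ω ≤ T ω := by
    intro ω
    show _ ≤ ∑ i, A (n + 1) i ω * X (n + 1) i ω
    exact Finset.single_le_sum
      (fun (i : Fin d) _ => mul_nonneg (hA0 (n + 1) i ω) (hX0 (n + 1) i ω))
      (Finset.mem_univ j)
  have hZTle : ∀ ω, Z n j ω * T ω ≤ T ω := fun ω => by
    calc Z n j ω * T ω ≤ 1 * T ω := mul_le_mul_of_nonneg_right (hZ1 j ω) (hT0 ω)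
      _ = T ω := one_mul _
  set D1 : Ω → ℝ := fun ω => (A (n + 1) j ω * X (n + 1) j ω - Z n j ω * T ω) / S n ω
    with hD1_def
  have hD1meas : Measurable[m0] D1 :=
    (((hAmeas j).mul (hXmeas j)).sub ((hZmeas j).mul hTmeas)).div hSmeas
  have hD1b : ∀ ω, |D1 ω| ≤ (∑ i, a i)⁻¹ * T ω := by
    intro ω
    have hs := hSpos ω
    have ht := hT0 ω
    have hu0 : 0 ≤ A (n + 1) j ω * X (n + 1) j ω := mul_nonneg (hA0 _ _ _) (hX0 _ _ _)
    have hzt0 : 0 ≤ Z n j ω * T ω := mul_nonneg (hZ0 j ω) ht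
    have h1 : |A (n + 1) j ω * X (n + 1) j ω - Z n j ω * T ω| ≤ T ω := by
      rw [abs_le]
      constructor
      · linarith [hZTle ω]
      · linarith [hAXleT ω]
    have h2 : |D1 ω| = |A (n + 1) j ω * X (n + 1) j ω - Z n j ω * T ω| / S n ω := by
      show |(A (n + 1) j ω * X (n + 1) j ω - Z n j ω * T ω) / S n ω| = _
      rw [abs_div, abs_of_pos hs]
    rw [h2, inv_mul_eq_div]
    calc |A (n + 1) j ω * X (n + 1) j ω - Z n j ω * T ω| / S n ω
        ≤ T ω / S n ω := by gcongr
      _ ≤ T ω / (∑ i, a i) := by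
          apply div_le_div_of_nonneg_left ht hapos (hS_ge ω)
  have hD1int : Integrable D1 μ := by
    refine (hTint.const_mul ((∑ i, a i)⁻¹)).mono' hD1meas.aestronglyMeasurable
      (ae_of_all _ fun ω => ?_)
    rw [Real.norm_eq_abs]
    exact hD1b ω
  set Y : Ω → ℝ := fun ω => Z (n + 1) j ω - Z n j ω - D1 ω with hY_def
  have hYint : Integrable Y μ := by
    have he : Y = (Z (n + 1) j - Z n j) - D1 := by
      funext ω
      simp only [hY_def, Pi.sub_apply]
    rw [he]
    exact (hZ1int.sub (hZint j)).sub hD1int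
  -- conditional expectation of D1 vanishes
  have hZTint : Integrable (fun ω => Z n j ω * T ω) μ := by
    refine hTint.mono' ((hZmeas j).mul hTmeas).aestronglyMeasurable
      (ae_of_all _ fun ω => ?_)
    rw [Real.norm_eq_abs, abs_of_nonneg (mul_nonneg (hZ0 j ω) (hT0 ω))]
    exact hZTle ω
  have hZTcond : μ[fun ω => Z n j ω * T ω|𝒢 n] =ᵐ[μ] fun ω => Z n j ω * c := by
    have he : (fun ω => Z n j ω * T ω) = Z n j * T := rfl
    rw [he]
    have hfg : Integrable (Z n j * T) μ := hZTint
    refine (condExp_mul_of_stronglyMeasurable_left ((hZm j).stronglyMeasurable) hfg hTint).trans ?_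
    filter_upwards [hTcond] with ω hω
    rw [Pi.mul_apply, hω]
  have hD1cond : μ[D1|𝒢 n] =ᵐ[μ] 0 := by
    have hg : Integrable
        ((fun ω => A (n + 1) j ω * X (n + 1) j ω) - fun ω => Z n j ω * T ω) μ :=
      (hAXint j).sub hZTint
    have he : D1 = (fun ω => (S n ω)⁻¹) *
        ((fun ω => A (n + 1) j ω * X (n + 1) j ω) - fun ω => Z n j ω * T ω) := by
      funext ω
      simp only [hD1_def, Pi.mul_apply, Pi.sub_apply]
      rw [div_eq_inv_mul]
    have hfg : Integrable ((fun ω => (S n ω)⁻¹) *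
        ((fun ω => A (n + 1) j ω * X (n + 1) j ω) - fun ω => Z n j ω * T ω)) μ := by
      rw [← he]; exact hD1int
    rw [he]
    refine (condExp_mul_of_stronglyMeasurable_left (hSm.inv.stronglyMeasurable) hfg hg).trans ?_
    have h0 : μ[(fun ω => A (n + 1) j ω * X (n + 1) j ω) - fun ω => Z n j ω * T ω|𝒢 n]
        =ᵐ[μ] 0 := by
      refine (condExp_sub (hAXint j) hZTint _).trans ?_
      filter_upwards [keyc j, hZTcond] with ω h1 h2
      rw [Pi.sub_apply, h1, h2, Pi.zero_apply]
      ring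
    filter_upwards [h0] with ω h0ω
    rw [Pi.mul_apply, h0ω, Pi.zero_apply, mul_zero]
  -- the pointwise bound on Y
  have hYb : ∀ ω, |Y ω| ≤ T ω ^ 2 / S n ω ^ 2 := by
    intro ω
    have hs := hSpos ω
    have ht := hT0 ω
    have hst : 0 < S n ω + T ω := by linarith
    have hu0 : 0 ≤ A (n + 1) j ω * X (n + 1) j ω := mul_nonneg (hA0 _ _ _) (hX0 _ _ _)
    have hut := hAXleT ω
    have hN0' := hN0 j ω
    have hNs := hNle j ω
    have hY_eq : Y ω = T ω * (N j ω * T ω - (A (n + 1) j ω * X (n + 1) j ω) * S n ω)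
        / (S n ω ^ 2 * (S n ω + T ω)) := by
      simp only [hY_def, hD1_def]
      rw [hZ1e ω, hzeq j ω]
      field_simp
      ring
    have hden : (0:ℝ) < S n ω ^ 2 * (S n ω + T ω) := mul_pos (pow_pos hs 2) hst
    rw [hY_eq, abs_div, abs_of_pos hden]
    rw [div_le_div_iff₀ hden (pow_pos hs 2)]
    have habs : |T ω * (N j ω * T ω - A (n + 1) j ω * X (n + 1) j ω * S n ω)|
        ≤ T ω * (S n ω * T ω) := by
      rw [abs_mul, abs_of_nonneg ht]
      refine mul_le_mul_of_nonneg_left ?_ ht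
      rw [abs_le]
      constructor <;>
        nlinarith [mul_nonneg (sub_nonneg.mpr hNs) ht, mul_nonneg hu0 hs.le,
          mul_nonneg (sub_nonneg.mpr hut) hs.le, mul_nonneg hN0' ht]
    nlinarith [mul_le_mul_of_nonneg_right habs (sq_nonneg (S n ω)),
      mul_nonneg (mul_nonneg (mul_nonneg ht ht) ht) (sq_nonneg (S n ω))]
  -- the dominating function B and its conditional expectation
  set B : Ω → ℝ := fun ω => T ω ^ 2 / S n ω ^ 2 with hB_def
  have hBmeas : Measurable[m0] B := (hTmeas.pow_const 2).div (hSmeas.pow_const 2)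
  have hBint : Integrable B μ := by
    refine (hT2int.const_mul (((∑ i, a i) ^ 2)⁻¹)).mono' hBmeas.aestronglyMeasurable
      (ae_of_all _ fun ω => ?_)
    have hs := hSpos ω
    show ‖T ω ^ 2 / S n ω ^ 2‖ ≤ _
    rw [Real.norm_eq_abs, abs_of_nonneg (by positivity), inv_mul_eq_div]
    exact div_le_div_of_nonneg_left (sq_nonneg _) (by positivity)
      (pow_le_pow_left₀ hapos.le (hS_ge ω) 2)
  have hT2cond : μ[fun ω => T ω ^ 2|𝒢 n] =ᵐ[μ]
      fun ω => ∑ i, (∫ ω', (A (n + 1) i ω') ^ 2 ∂μ) * Z n i ω := by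
    have he : (fun ω => T ω ^ 2)
        = ∑ i : Fin d, fun ω => (A (n + 1) i ω) ^ 2 * X (n + 1) i ω := by
      funext ω
      rw [Finset.sum_apply]
      exact hTsq ω
    rw [he]
    refine (condExp_finsetSum (fun i _ => hA2Xint i) _).trans ?_
    have hall : ∀ᵐ ω ∂μ, ∀ i : Fin d,
        (μ[fun ω => (A (n + 1) i ω) ^ 2 * X (n + 1) i ω|𝒢 n]) ω
          = (∫ ω', (A (n + 1) i ω') ^ 2 ∂μ) * Z n i ω := ae_all_iff.mpr fun i => keyq i
    filter_upwards [hall] with ω hallω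
    rw [Finset.sum_apply]
    exact Finset.sum_congr rfl fun i _ => hallω i
  have hBcond : μ[B|𝒢 n] =ᵐ[μ]
      fun ω => (S n ω ^ 2)⁻¹ * ∑ i, (∫ ω', (A (n + 1) i ω') ^ 2 ∂μ) * Z n i ω := by
    have he : B = (fun ω => (S n ω ^ 2)⁻¹) * fun ω => T ω ^ 2 := by
      funext ω
      simp only [hB_def, Pi.mul_apply]
      rw [div_eq_inv_mul]
    have hfg : Integrable ((fun ω => (S n ω ^ 2)⁻¹) * fun ω => T ω ^ 2) μ := by
      rw [← he]; exact hBint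
    rw [he]
    refine (condExp_mul_of_stronglyMeasurable_left ((hSm.pow_const 2).inv.stronglyMeasurable)
      hfg hT2int).trans ?_
    filter_upwards [hT2cond] with ω hω
    rw [Pi.mul_apply, hω, Pi.inv_apply]
  -- comparison of conditional expectations
  have habs1 : μ[Y|𝒢 n] ≤ᵐ[μ] μ[fun ω => abs (Y ω)|𝒢 n] :=
    condExp_mono hYint hYint.abs (ae_of_all _ fun ω => le_abs_self _)
  have habs2 : μ[fun ω => -Y ω|𝒢 n] ≤ᵐ[μ] μ[fun ω => abs (Y ω)|𝒢 n] :=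
    condExp_mono hYint.neg hYint.abs (ae_of_all _ fun ω => neg_le_abs _)
  have hnegY : μ[fun ω => -Y ω|𝒢 n] =ᵐ[μ] fun ω => -(μ[Y|𝒢 n]) ω := by
    have he : (fun ω => -Y ω) = -Y := rfl
    rw [he]
    refine (condExp_neg Y _).trans ?_
    filter_upwards with ω
    rw [Pi.neg_apply]
  have hYle : μ[fun ω => abs (Y ω)|𝒢 n] ≤ᵐ[μ] μ[B|𝒢 n] :=
    condExp_mono hYint.abs hBint (ae_of_all _ fun ω => hYb ω)
  -- the main decomposition
  have hmain : μ[Z (n + 1) j|𝒢 n] =ᵐ[μ]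
      fun ω => Z n j ω + ((μ[D1|𝒢 n]) ω + (μ[Y|𝒢 n]) ω) := by
    have hsplit : Z (n + 1) j = Z n j + (D1 + Y) := by
      funext ω
      simp only [Pi.add_apply, hY_def]
      ring
    rw [hsplit]
    refine (condExp_add (hZint j) (hD1int.add hYint) _).trans ?_
    have h1 : μ[Z n j|𝒢 n] = Z n j :=
      condExp_of_stronglyMeasurable hm ((hZm j).stronglyMeasurable) (hZint j)
    have h2 : μ[D1 + Y|𝒢 n] =ᵐ[μ] μ[D1|𝒢 n] + μ[Y|𝒢 n] := condExp_add hD1int hYint _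
    filter_upwards [h2] with ω h2ω
    rw [Pi.add_apply, h1, h2ω, Pi.add_apply]
  -- conclusion
  have hqnn : ∀ i : Fin d, (0:ℝ) ≤ ∫ ω', (A (n + 1) i ω') ^ 2 ∂μ := fun i =>
    integral_nonneg fun ω => sq_nonneg _
  filter_upwards [hmain, hD1cond, habs1, habs2, hnegY, hYle, hBcond] with ω hmainω hD1ω
    h1ω h2ω hnegω hYleω hBω
  have hs := hSpos ω
  have hEY : (μ[Z (n + 1) j|𝒢 n]) ω - Z n j ω = (μ[Y|𝒢 n]) ω := by
    rw [hmainω, hD1ω]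
    simp
  have hBub : (μ[B|𝒢 n]) ω ≤ (∑ i, ∫ ω', (A (n + 1) i ω') ^ 2 ∂μ) / S n ω ^ 2 := by
    rw [hBω, div_eq_inv_mul]
    refine mul_le_mul_of_nonneg_left ?_ (by positivity)
    refine Finset.sum_le_sum fun i _ => ?_
    calc (∫ ω', (A (n + 1) i ω') ^ 2 ∂μ) * Z n i ω
        ≤ (∫ ω', (A (n + 1) i ω') ^ 2 ∂μ) * 1 :=
          mul_le_mul_of_nonneg_left (hZ1 i ω) (hqnn i)
      _ = _ := mul_one _
  rw [hEY]
  rw [abs_le]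
  constructor
  · have h := le_trans (le_trans h2ω hYleω) hBub
    rw [hnegω] at h
    linarith
  · exact le_trans (le_trans (le_trans h1ω hYleω) hBub) le_rfl
end
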